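/- arXiv:0906.1178 — 5 statements merged into one kernel-verified Lean document; each statement's English description precedes it below -/
import Mathlib

section
/- Fix a real number a ≠ 0 and let G be the subgroup of isometries of ℝ³ generated by the three maps R₀(x,y,z) = (y + a, x − a, −z + a), R₁(x,y,z) = (x, −y, z), S(x,y,z) = (−y, −z, x). Then the orbit of the origin under G (the vertex set of the regular complex K₂(1,2)) equals the body-centered cubic lattice aΛ_{(1,1,1)} = {(am₁, am₂, am₃) : m₁, m₂, m₃ ∈ ℤ with m₁ ≡ m₂ ≡ m₃ (mod 2)}. -/
/- STATEMENT 11: For a ≠ 0, the orbit of the origin under the group generated by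
R₀(x,y,z) = (y + a, x − a, −z + a), R₁(x,y,z) = (x, −y, z), S(x,y,z) = (−y, −z, x)
(the vertex set of K₂(1,2)) is the body-centered cubic lattice
aΛ_{(1,1,1)} = {(am₁, am₂, am₃) : mᵢ ∈ ℤ, m₁ ≡ m₂ ≡ m₃ (mod 2)}. -/

noncomputable section

abbrev E3 : Type := EuclideanSpace ℝ (Fin 3)

def pt (x y z : ℝ) : E3 := WithLp.toLp 2 ![x, y, z]

@[simp] lemma pt_app0 (x y z : ℝ) : pt x y z 0 = x := rfl
@[simp] lemma pt_app1 (x y z : ℝ) : pt x y z 1 = y := rfl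
@[simp] lemma pt_app2 (x y z : ℝ) : pt x y z 2 = z := rfl

lemma pt_congr {x y z x' y' z' : ℝ} (h1 : x = x') (h2 : y = y') (h3 : z = z') :
    pt x y z = pt x' y' z' := by rw [h1, h2, h3]

lemma eq_pt (p : E3) : p = pt (p 0) (p 1) (p 2) := by
  ext i; fin_cases i <;> rfl

lemma zero_app : ∀ i : Fin 3, (0 : E3) i = 0 := fun _ => rfl

/-- Membership in the scaled BCC lattice. -/
def InL (a : ℝ) (y : E3) : Prop :=
  ∃ m1 m2 m3 : ℤ,
    y 0 = a * m1 ∧ y 1 = a * m2 ∧ y 2 = a * m3 ∧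
    Int.ModEq 2 m1 m2 ∧ Int.ModEq 2 m2 m3

lemma inv_eq_of_eq (g : E3 ≃ᵢ E3) {p q : E3} (h : g q = p) : g⁻¹ p = q := by
  conv_lhs => rw [← h]
  exact g.inv_apply_self _

theorem vertex_set_K2_12
    (a : ℝ) (ha : a ≠ 0)
    (R0 R1 S : E3 ≃ᵢ E3)
    (hR0 : ∀ x : E3, R0 x = pt (x 1 + a) (x 0 - a) (-(x 2) + a))
    (hR1 : ∀ x : E3, R1 x = pt (x 0) (-(x 1)) (x 2))
    (hS : ∀ x : E3, S x = pt (-(x 1)) (-(x 2)) (x 0)) :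
    {y : E3 | ∃ g ∈ Subgroup.closure {R0, R1, S}, g 0 = y} =
      {y : E3 | ∃ m1 m2 m3 : ℤ,
        y 0 = a * m1 ∧ y 1 = a * m2 ∧ y 2 = a * m3 ∧
        Int.ModEq 2 m1 m2 ∧ Int.ModEq 2 m2 m3} := by
  set K := Subgroup.closure {R0, R1, S} with hKdef
  -- inverse formulas
  have hR0' : ∀ p : E3, R0⁻¹ p = pt (p 1 + a) (p 0 - a) (a - p 2) := by
    intro p
    refine inv_eq_of_eq R0 ?_
    rw [hR0]
    conv_rhs => rw [eq_pt p]
    apply pt_congr <;> simp only [pt_app0, pt_app1, pt_app2] <;> ring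
  have hR1' : ∀ p : E3, R1⁻¹ p = pt (p 0) (-(p 1)) (p 2) := by
    intro p
    refine inv_eq_of_eq R1 ?_
    rw [hR1]
    conv_rhs => rw [eq_pt p]
    apply pt_congr <;> simp only [pt_app0, pt_app1, pt_app2] <;> ring
  have hS' : ∀ p : E3, S⁻¹ p = pt (p 2) (-(p 0)) (-(p 1)) := by
    intro p
    refine inv_eq_of_eq S ?_
    rw [hS]
    conv_rhs => rw [eq_pt p]
    apply pt_congr <;> simp only [pt_app0, pt_app1, pt_app2] <;> ring
  have mR0 : R0 ∈ K := Subgroup.subset_closure (by simp)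
  have mR1 : R1 ∈ K := Subgroup.subset_closure (by simp)
  have mS : S ∈ K := Subgroup.subset_closure (by simp)
  -- the lattice is invariant under the six generator maps
  have stepR0 : ∀ y : E3, InL a y → InL a (R0 y) := by
    rintro y ⟨m1, m2, m3, e1, e2, e3, h12, h23⟩
    unfold Int.ModEq at h12 h23
    refine ⟨m2 + 1, m1 - 1, 1 - m3, ?_, ?_, ?_, ?_, ?_⟩
    · simp only [hR0, pt_app0, pt_app1, pt_app2, e1, e2, e3] <;> push_cast <;> ring
    · simp only [hR0, pt_app0, pt_app1, pt_app2, e1, e2, e3] <;> push_cast <;> ring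
    · simp only [hR0, pt_app0, pt_app1, pt_app2, e1, e2, e3] <;> push_cast <;> ring
    · unfold Int.ModEq; omega
    · unfold Int.ModEq; omega
  have stepR0' : ∀ y : E3, InL a y → InL a (R0⁻¹ y) := by
    rintro y ⟨m1, m2, m3, e1, e2, e3, h12, h23⟩
    unfold Int.ModEq at h12 h23
    refine ⟨m2 + 1, m1 - 1, 1 - m3, ?_, ?_, ?_, ?_, ?_⟩
    · simp only [hR0', pt_app0, pt_app1, pt_app2, e1, e2, e3] <;> push_cast <;> ring
    · simp only [hR0', pt_app0, pt_app1, pt_app2, e1, e2, e3] <;> push_cast <;> ring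
    · simp only [hR0', pt_app0, pt_app1, pt_app2, e1, e2, e3] <;> push_cast <;> ring
    · unfold Int.ModEq; omega
    · unfold Int.ModEq; omega
  have stepR1 : ∀ y : E3, InL a y → InL a (R1 y) := by
    rintro y ⟨m1, m2, m3, e1, e2, e3, h12, h23⟩
    unfold Int.ModEq at h12 h23
    refine ⟨m1, -m2, m3, ?_, ?_, ?_, ?_, ?_⟩
    · simp only [hR1, pt_app0, pt_app1, pt_app2, e1, e2, e3] <;> push_cast <;> ring
    · simp only [hR1, pt_app0, pt_app1, pt_app2, e1, e2, e3] <;> push_cast <;> ring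
    · simp only [hR1, pt_app0, pt_app1, pt_app2, e1, e2, e3] <;> push_cast <;> ring
    · unfold Int.ModEq; omega
    · unfold Int.ModEq; omega
  have stepR1' : ∀ y : E3, InL a y → InL a (R1⁻¹ y) := by
    rintro y ⟨m1, m2, m3, e1, e2, e3, h12, h23⟩
    unfold Int.ModEq at h12 h23
    refine ⟨m1, -m2, m3, ?_, ?_, ?_, ?_, ?_⟩
    · simp only [hR1', pt_app0, pt_app1, pt_app2, e1, e2, e3] <;> push_cast <;> ring
    · simp only [hR1', pt_app0, pt_app1, pt_app2, e1, e2, e3] <;> push_cast <;> ring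
    · simp only [hR1', pt_app0, pt_app1, pt_app2, e1, e2, e3] <;> push_cast <;> ring
    · unfold Int.ModEq; omega
    · unfold Int.ModEq; omega
  have stepS : ∀ y : E3, InL a y → InL a (S y) := by
    rintro y ⟨m1, m2, m3, e1, e2, e3, h12, h23⟩
    unfold Int.ModEq at h12 h23
    refine ⟨-m2, -m3, m1, ?_, ?_, ?_, ?_, ?_⟩
    · simp only [hS, pt_app0, pt_app1, pt_app2, e1, e2, e3] <;> push_cast <;> ring
    · simp only [hS, pt_app0, pt_app1, pt_app2, e1, e2, e3] <;> push_cast <;> ring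
    · simp only [hS, pt_app0, pt_app1, pt_app2, e1, e2, e3] <;> push_cast <;> ring
    · unfold Int.ModEq; omega
    · unfold Int.ModEq; omega
  have stepS' : ∀ y : E3, InL a y → InL a (S⁻¹ y) := by
    rintro y ⟨m1, m2, m3, e1, e2, e3, h12, h23⟩
    unfold Int.ModEq at h12 h23
    refine ⟨m3, -m1, -m2, ?_, ?_, ?_, ?_, ?_⟩
    · simp only [hS', pt_app0, pt_app1, pt_app2, e1, e2, e3] <;> push_cast <;> ring
    · simp only [hS', pt_app0, pt_app1, pt_app2, e1, e2, e3] <;> push_cast <;> ring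
    · simp only [hS', pt_app0, pt_app1, pt_app2, e1, e2, e3] <;> push_cast <;> ring
    · unfold Int.ModEq; omega
    · unfold Int.ModEq; omega
  -- forward invariance of the lattice under the whole group
  have main : ∀ g : E3 ≃ᵢ E3, g ∈ K → ∀ y : E3, InL a y → InL a (g y) ∧ InL a (g⁻¹ y) := by
    intro g hg
    refine Subgroup.closure_induction
      (p := fun g _ => ∀ y : E3, InL a y → InL a (g y) ∧ InL a (g⁻¹ y)) ?_ ?_ ?_ ?_ hg
    · intro x hx
      simp only [Set.mem_insert_iff, Set.mem_singleton_iff] at hx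
      rcases hx with rfl | rfl | rfl
      · exact fun y hy => ⟨stepR0 y hy, stepR0' y hy⟩
      · exact fun y hy => ⟨stepR1 y hy, stepR1' y hy⟩
      · exact fun y hy => ⟨stepS y hy, stepS' y hy⟩
    · intro y hy
      constructor
      · simpa using hy
      · simpa using hy
    · intro x y' hx hy px py z hz
      constructor
      · rw [IsometryEquiv.mul_apply]
        exact (px _ ((py z hz).1)).1
      · rw [mul_inv_rev, IsometryEquiv.mul_apply]
        exact (py _ ((px z hz).2)).2
    · intro x hx px y hy
      refine ⟨(px y hy).2, ?_⟩
      rw [inv_inv]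
      exact (px y hy).1
  -- translation elements
  set t1 : E3 ≃ᵢ E3 := (R0 * R1) * (R0 * R1) * ((S * R1) * S⁻¹) * R1 with ht1def
  have mt1 : t1 ∈ K :=
    mul_mem (mul_mem (mul_mem (mul_mem mR0 mR1) (mul_mem mR0 mR1))
      (mul_mem (mul_mem mS mR1) (inv_mem mS))) mR1
  have ht1 : ∀ p : E3, t1 p = pt (p 0 + 2 * a) (p 1) (p 2) := by
    intro p
    simp only [ht1def, IsometryEquiv.mul_apply, hR0, hR1, hS, hS',
      pt_app0, pt_app1, pt_app2]
    apply pt_congr <;> ring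
  set t3 : E3 ≃ᵢ E3 := (S * t1) * S⁻¹ with ht3def
  have mt3 : t3 ∈ K := mul_mem (mul_mem mS mt1) (inv_mem mS)
  have ht3 : ∀ p : E3, t3 p = pt (p 0) (p 1) (p 2 + 2 * a) := by
    intro p
    simp only [ht3def, IsometryEquiv.mul_apply, ht1, hS, hS', pt_app0, pt_app1, pt_app2]
    apply pt_congr <;> ring
  set t2 : E3 ≃ᵢ E3 := (S * t3) * S⁻¹ with ht2def
  have mt2 : t2 ∈ K := mul_mem (mul_mem mS mt3) (inv_mem mS)
  have ht2 : ∀ p : E3, t2 p = pt (p 0) (p 1 - 2 * a) (p 2) := by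
    intro p
    simp only [ht2def, IsometryEquiv.mul_apply, ht3, hS, hS', pt_app0, pt_app1, pt_app2]
    apply pt_congr <;> ring
  have ht1' : ∀ p : E3, t1⁻¹ p = pt (p 0 - 2 * a) (p 1) (p 2) := by
    intro p
    refine inv_eq_of_eq t1 ?_
    rw [ht1]
    conv_rhs => rw [eq_pt p]
    apply pt_congr <;> simp only [pt_app0, pt_app1, pt_app2] <;> ring
  have ht2' : ∀ p : E3, t2⁻¹ p = pt (p 0) (p 1 + 2 * a) (p 2) := by
    intro p
    refine inv_eq_of_eq t2 ?_
    rw [ht2]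
    conv_rhs => rw [eq_pt p]
    apply pt_congr <;> simp only [pt_app0, pt_app1, pt_app2] <;> ring
  have ht3' : ∀ p : E3, t3⁻¹ p = pt (p 0) (p 1) (p 2 - 2 * a) := by
    intro p
    refine inv_eq_of_eq t3 ?_
    rw [ht3]
    conv_rhs => rw [eq_pt p]
    apply pt_congr <;> simp only [pt_app0, pt_app1, pt_app2] <;> ring
  -- orbit is closed under the group action
  have hO_step : ∀ h : E3 ≃ᵢ E3, h ∈ K → ∀ z : E3,
      (∃ g ∈ K, g 0 = z) → ∃ g ∈ K, g 0 = h z := by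
    rintro h hh z ⟨g, hg, rfl⟩
    exact ⟨h * g, mul_mem hh hg, rfl⟩
  -- shift lemmas
  have shift1 : ∀ (k : ℤ) (z : E3), (∃ g ∈ K, g 0 = z) →
      ∃ g ∈ K, g 0 = pt (z 0 + 2 * a * k) (z 1) (z 2) := by
    intro k
    induction k using Int.induction_on with
    | zero =>
      intro z hz
      have e : pt (z 0 + 2 * a * ((0 : ℤ) : ℝ)) (z 1) (z 2) = z := by
        conv_rhs => rw [eq_pt z]
        apply pt_congr <;> push_cast <;> ring
      rw [e]; exact hz
    | succ k ih =>
      intro z hz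
      have h2 := hO_step t1 mt1 _ (ih z hz)
      rw [ht1] at h2
      simp only [pt_app0, pt_app1, pt_app2] at h2
      have e : pt (z 0 + 2 * a * (((k : ℤ) + 1 : ℤ) : ℝ)) (z 1) (z 2)
          = pt (z 0 + 2 * a * ((k : ℤ) : ℝ) + 2 * a) (z 1) (z 2) := by
        apply pt_congr <;> push_cast <;> ring
      rw [e]; exact h2
    | pred k ih =>
      intro z hz
      have h2 := hO_step t1⁻¹ (inv_mem mt1) _ (ih z hz)
      rw [ht1'] at h2
      simp only [pt_app0, pt_app1, pt_app2] at h2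
      have e : pt (z 0 + 2 * a * (((-(k : ℤ) - 1) : ℤ) : ℝ)) (z 1) (z 2)
          = pt (z 0 + 2 * a * (((-(k : ℤ)) : ℤ) : ℝ) - 2 * a) (z 1) (z 2) := by
        apply pt_congr <;> push_cast <;> ring
      rw [e]; exact h2
  have shift2 : ∀ (k : ℤ) (z : E3), (∃ g ∈ K, g 0 = z) →
      ∃ g ∈ K, g 0 = pt (z 0) (z 1 + 2 * a * k) (z 2) := by
    intro k
    induction k using Int.induction_on with
    | zero =>
      intro z hz
      have e : pt (z 0) (z 1 + 2 * a * ((0 : ℤ) : ℝ)) (z 2) = z := by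
        conv_rhs => rw [eq_pt z]
        apply pt_congr <;> push_cast <;> ring
      rw [e]; exact hz
    | succ k ih =>
      intro z hz
      have h2 := hO_step t2⁻¹ (inv_mem mt2) _ (ih z hz)
      rw [ht2'] at h2
      simp only [pt_app0, pt_app1, pt_app2] at h2
      have e : pt (z 0) (z 1 + 2 * a * (((k : ℤ) + 1 : ℤ) : ℝ)) (z 2)
          = pt (z 0) (z 1 + 2 * a * ((k : ℤ) : ℝ) + 2 * a) (z 2) := by
        apply pt_congr <;> push_cast <;> ring
      rw [e]; exact h2
    | pred k ih =>
      intro z hz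
      have h2 := hO_step t2 mt2 _ (ih z hz)
      rw [ht2] at h2
      simp only [pt_app0, pt_app1, pt_app2] at h2
      have e : pt (z 0) (z 1 + 2 * a * (((-(k : ℤ) - 1) : ℤ) : ℝ)) (z 2)
          = pt (z 0) (z 1 + 2 * a * (((-(k : ℤ)) : ℤ) : ℝ) - 2 * a) (z 2) := by
        apply pt_congr <;> push_cast <;> ring
      rw [e]; exact h2
  have shift3 : ∀ (k : ℤ) (z : E3), (∃ g ∈ K, g 0 = z) →
      ∃ g ∈ K, g 0 = pt (z 0) (z 1) (z 2 + 2 * a * k) := by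
    intro k
    induction k using Int.induction_on with
    | zero =>
      intro z hz
      have e : pt (z 0) (z 1) (z 2 + 2 * a * ((0 : ℤ) : ℝ)) = z := by
        conv_rhs => rw [eq_pt z]
        apply pt_congr <;> push_cast <;> ring
      rw [e]; exact hz
    | succ k ih =>
      intro z hz
      have h2 := hO_step t3 mt3 _ (ih z hz)
      rw [ht3] at h2
      simp only [pt_app0, pt_app1, pt_app2] at h2
      have e : pt (z 0) (z 1) (z 2 + 2 * a * (((k : ℤ) + 1 : ℤ) : ℝ))
          = pt (z 0) (z 1) (z 2 + 2 * a * ((k : ℤ) : ℝ) + 2 * a) := by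
        apply pt_congr <;> push_cast <;> ring
      rw [e]; exact h2
    | pred k ih =>
      intro z hz
      have h2 := hO_step t3⁻¹ (inv_mem mt3) _ (ih z hz)
      rw [ht3'] at h2
      simp only [pt_app0, pt_app1, pt_app2] at h2
      have e : pt (z 0) (z 1) (z 2 + 2 * a * (((-(k : ℤ) - 1) : ℤ) : ℝ))
          = pt (z 0) (z 1) (z 2 + 2 * a * (((-(k : ℤ)) : ℤ) : ℝ) - 2 * a) := by
        apply pt_congr <;> push_cast <;> ring
      rw [e]; exact h2
  ext y
  constructor
  · rintro ⟨g, hg, rfl⟩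
    exact (main g hg 0 ⟨0, 0, 0, by simp [zero_app], by simp [zero_app],
      by simp [zero_app], Int.ModEq.refl 0, Int.ModEq.refl 0⟩).1
  · rintro ⟨m1, m2, m3, e1, e2, e3, h12, h23⟩
    unfold Int.ModEq at h12 h23
    rcases Int.even_or_odd m1 with he | ho
    · -- all even
      obtain ⟨r, hr⟩ := he
      obtain ⟨k1, hk1⟩ : ∃ k : ℤ, m1 = 2 * k := ⟨m1 / 2, by omega⟩
      obtain ⟨k2, hk2⟩ : ∃ k : ℤ, m2 = 2 * k := ⟨m2 / 2, by omega⟩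
      obtain ⟨k3, hk3⟩ : ∃ k : ℤ, m3 = 2 * k := ⟨m3 / 2, by omega⟩
      have base : ∃ g ∈ K, g 0 = (0 : E3) := ⟨1, one_mem _, rfl⟩
      have s1 := shift1 k1 _ base
      have s2 := shift2 k2 _ s1
      have s3 := shift3 k3 _ s2
      simp only [pt_app0, pt_app1, pt_app2, zero_app] at s3
      have e : pt (0 + 2 * a * (k1 : ℝ)) (0 + 2 * a * (k2 : ℝ))
          (0 + 2 * a * (k3 : ℝ)) = y := by
        conv_rhs => rw [eq_pt y]
        refine pt_congr ?_ ?_ ?_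
        · rw [e1, hk1]; push_cast; ring
        · rw [e2, hk2]; push_cast; ring
        · rw [e3, hk3]; push_cast; ring
      rw [e] at s3; exact s3
    · -- all odd
      obtain ⟨r, hr⟩ := ho
      obtain ⟨k1, hk1⟩ : ∃ k : ℤ, m1 = 2 * k + 1 := ⟨(m1 - 1) / 2, by omega⟩
      obtain ⟨k2, hk2⟩ : ∃ k : ℤ, m2 = 2 * k - 1 := ⟨(m2 + 1) / 2, by omega⟩
      obtain ⟨k3, hk3⟩ : ∃ k : ℤ, m3 = 2 * k + 1 := ⟨(m3 - 1) / 2, by omega⟩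
      have base : ∃ g ∈ K, g 0 = R0 (0 : E3) := ⟨R0, mR0, rfl⟩
      rw [hR0] at base
      simp only [zero_app] at base
      have s1 := shift1 k1 _ base
      have s2 := shift2 k2 _ s1
      have s3 := shift3 k3 _ s2
      simp only [pt_app0, pt_app1, pt_app2] at s3
      have e : pt (0 + a + 2 * a * (k1 : ℝ))
          (0 - a + 2 * a * (k2 : ℝ))
          (-0 + a + 2 * a * (k3 : ℝ)) = y := by
        conv_rhs => rw [eq_pt y]
        refine pt_congr ?_ ?_ ?_
        · rw [e1, hk1]; push_cast; ring
        · rw [e2, hk2]; push_cast; ring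
        · rw [e3, hk3]; push_cast; ring
      rw [e] at s3; exact s3
end
end

section
/- Let T = {(1,1,1), (1,−1,−1), (−1,1,−1), (−1,−1,1)} and let [3,3]* = {A ∈ SO(3) : A(T) = T} ∪ {−A : A ∈ SO(3), A(T) = T}, a group of order 24. Then the subgroup of O(3) generated by the two maps R₁(x,y,z) = (x, −y, z) and S(x,y,z) = (−y, −z, x) equals [3,3]*. (This is the vertex-figure group of the regular complex K₂(1,2) at its base vertex.) -/
/- STATEMENT 12: With T = {(1,1,1), (1,−1,−1), (−1,1,−1), (−1,−1,1)} and
[3,3]* = {A ∈ SO(3) : A(T) = T} ∪ (−I)·{A ∈ SO(3) : A(T) = T}, a group of order 24,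
the subgroup of O(3) generated by the two maps R₁(x,y,z) = (x, −y, z) and S(x,y,z) = (−y, −z, x)
equals [3,3]*. -/

noncomputable section

/-- The regular tetrahedron inscribed at alternating vertices of the cube {±1}³. -/
def tetT : Set E3 := {pt 1 1 1, pt 1 (-1) (-1), pt (-1) 1 (-1), pt (-1) (-1) 1}

/-- The rotation group [3,3]⁺ of the tetrahedron. -/
def rotT : Set (E3 ≃ₗᵢ[ℝ] E3) :=
  {A : E3 ≃ₗᵢ[ℝ] E3 | LinearEquiv.det A.toLinearEquiv = 1 ∧ (⇑A) '' tetT = tetT}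

/-- The group [3,3]* = [3,3]⁺ ∪ (−I)[3,3]⁺. -/
def tet33star : Set (E3 ≃ₗᵢ[ℝ] E3) :=
  rotT ∪ {B | ∃ A ∈ rotT, ∀ x : E3, B x = -(A x)}

@[simp] lemma pt0 (a b c : ℝ) : pt a b c 0 = a := rfl
@[simp] lemma pt1 (a b c : ℝ) : pt a b c 1 = b := rfl
@[simp] lemma pt2 (a b c : ℝ) : pt a b c 2 = c := rfl

lemma pt_eta (x : E3) : x = pt (x 0) (x 1) (x 2) := by
  ext i; fin_cases i <;> simp [pt]

lemma decomp (x : E3) : x = ((x 0 + x 1)/2) • pt 1 1 1 + ((x 0 - x 2)/2) • pt 1 (-1) (-1)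
    + ((x 1 - x 2)/2) • pt (-1) 1 (-1) := by
  ext i; fin_cases i <;> simp [pt] <;> ring

lemma apply_decomp (A : E3 ≃ₗᵢ[ℝ] E3) (x : E3) :
    A x = ((x 0 + x 1)/2) • A (pt 1 1 1) + ((x 0 - x 2)/2) • A (pt 1 (-1) (-1))
    + ((x 1 - x 2)/2) • A (pt (-1) 1 (-1)) := by
  conv_lhs => rw [decomp x]
  simp [map_add, map_smul]

lemma ext_of_tet (A B : E3 ≃ₗᵢ[ℝ] E3) (h1 : A (pt 1 1 1) = B (pt 1 1 1))
    (h2 : A (pt 1 (-1) (-1)) = B (pt 1 (-1) (-1)))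
    (h3 : A (pt (-1) 1 (-1)) = B (pt (-1) 1 (-1))) : A = B := by
  ext1 x
  rw [apply_decomp A, apply_decomp B, h1, h2, h3]

lemma det_of_formula (A : E3 ≃ₗᵢ[ℝ] E3) (M : Matrix (Fin 3) (Fin 3) ℝ)
    (h : ∀ x : E3, ∀ i, A x i = M i 0 * x 0 + M i 1 * x 1 + M i 2 * x 2) :
    LinearMap.det (A.toLinearEquiv : E3 →ₗ[ℝ] E3) = M.det := by
  rw [← LinearMap.det_toMatrix (PiLp.basisFun 2 ℝ (Fin 3))]
  congr 1
  ext i j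
  rw [LinearMap.toMatrix_apply]
  simp only [PiLp.basisFun_repr, PiLp.basisFun_apply]
  show A (WithLp.equiv 2 _ |>.symm (Pi.single j 1)) i = M i j
  rw [h]
  fin_cases j <;> simp [Function.update]

lemma mem_rotT_of (A : E3 ≃ₗᵢ[ℝ] E3) (M : Matrix (Fin 3) (Fin 3) ℝ)
    (h : ∀ x : E3, A x = pt (M 0 0 * x 0 + M 0 1 * x 1 + M 0 2 * x 2)
      (M 1 0 * x 0 + M 1 1 * x 1 + M 1 2 * x 2)
      (M 2 0 * x 0 + M 2 1 * x 1 + M 2 2 * x 2))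
    (hdet : M.det = 1) (himg : (⇑A) '' tetT = tetT) : A ∈ rotT := by
  refine ⟨Units.ext ?_, himg⟩
  rw [LinearEquiv.coe_det, Units.val_one,
    det_of_formula A M (fun x i => by rw [h]; fin_cases i <;> rfl), hdet]

lemma det_eq_one_of_rotT {A : E3 ≃ₗᵢ[ℝ] E3} (hA : A ∈ rotT) :
    LinearMap.det (A.toLinearEquiv : E3 →ₗ[ℝ] E3) = 1 := by
  have := congrArg Units.val hA.1
  rwa [LinearEquiv.coe_det, Units.val_one] at this

lemma rot_one : (1 : E3 ≃ₗᵢ[ℝ] E3) ∈ rotT := by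
  constructor
  · apply Units.ext
    rw [LinearEquiv.coe_det, Units.val_one]
    show LinearMap.det ((1 : E3 ≃ₗᵢ[ℝ] E3).toLinearEquiv : E3 →ₗ[ℝ] E3) = 1
    have : ((1 : E3 ≃ₗᵢ[ℝ] E3).toLinearEquiv : E3 →ₗ[ℝ] E3) = LinearMap.id := rfl
    rw [this, LinearMap.det_id]
  · show (⇑(1 : E3 ≃ₗᵢ[ℝ] E3)) '' tetT = tetT
    have : ⇑(1 : E3 ≃ₗᵢ[ℝ] E3) = id := rfl
    rw [this, Set.image_id]

lemma rot_mul {A B : E3 ≃ₗᵢ[ℝ] E3} (hA : A ∈ rotT) (hB : B ∈ rotT) : A * B ∈ rotT := by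
  constructor
  · have : (A * B).toLinearEquiv = A.toLinearEquiv * B.toLinearEquiv := rfl
    rw [this, map_mul, hA.1, hB.1, one_mul]
  · have : ⇑(A * B) = ⇑A ∘ ⇑B := rfl
    rw [this, Set.image_comp, hB.2, hA.2]

lemma rot_inv {A : E3 ≃ₗᵢ[ℝ] E3} (hA : A ∈ rotT) : A⁻¹ ∈ rotT := by
  constructor
  · have : (A⁻¹).toLinearEquiv = (A.toLinearEquiv)⁻¹ := rfl
    rw [this, map_inv, hA.1, inv_one]
  · have h1 : ⇑(A⁻¹) ∘ ⇑A = id := funext fun x => A.symm_apply_apply x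
    conv_lhs => rw [← hA.2]
    rw [← Set.image_comp, h1, Set.image_id]

lemma p1_mem : pt 1 1 1 ∈ tetT := by simp [tetT]
lemma p2_mem : pt 1 (-1) (-1) ∈ tetT := by simp [tetT]
lemma p3_mem : pt (-1) 1 (-1) ∈ tetT := by simp [tetT]

lemma p2_ne_p1 : pt 1 (-1) (-1) ≠ pt 1 1 1 := by
  intro h; have := congrArg (fun v : E3 => v 1) h; simp at this; norm_num at this
lemma p3_ne_p1 : pt (-1) 1 (-1) ≠ pt 1 1 1 := by
  intro h; have := congrArg (fun v : E3 => v 0) h; simp at this; norm_num at this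
lemma p3_ne_p2 : pt (-1) 1 (-1) ≠ pt 1 (-1) (-1) := by
  intro h; have := congrArg (fun v : E3 => v 0) h; simp at this; norm_num at this

-- value table for injectivity
def tbl : Fin 4 → Fin 3 → Fin 3 → ℤ :=
  ![![![1,2,3],![2,3,1],![3,1,2]],
    ![![-2,-3,1],![-3,-1,2],![-1,-2,3]],
    ![![3,-1,-2],![1,-2,-3],![2,-3,-1]],
    ![![-1,2,-3],![-2,3,-1],![-3,1,-2]]]

def tv : Fin 2 → Fin 4 → Fin 3 → Fin 3 → ℤ :=
  ![tbl, fun i j k => -(tbl i j k)]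

lemma tv_inj : ∀ a i j a' i' j', tv a i j = tv a' i' j' →
    a = a' ∧ i = i' ∧ j = j' := by decide

set_option maxHeartbeats 2000000 in
theorem vertex_figure_group_K2_12
    (R1 S : E3 ≃ₗᵢ[ℝ] E3)
    (hR1 : ∀ x : E3, R1 x = pt (x 0) (-(x 1)) (x 2))
    (hS : ∀ x : E3, S x = pt (-(x 1)) (-(x 2)) (x 0)) :
    (Subgroup.closure {R1, S} : Set (E3 ≃ₗᵢ[ℝ] E3)) = tet33star ∧
      Nat.card tet33star = 24 := by
  have mul_app : ∀ (A B : E3 ≃ₗᵢ[ℝ] E3) (x : E3), (A * B) x = A (B x) := fun _ _ _ => rfl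
  -- word formulas
  have hS2f : ∀ x : E3, (S*S) x = pt (x 2) (-(x 0)) (-(x 1)) := by
    intro x; simp only [mul_app, hS, pt0, pt1, pt2, neg_neg]
  have hCf : ∀ x : E3, (R1*S*R1) x = pt (x 1) (x 2) (x 0) := by
    intro x; simp only [mul_app, hR1, hS, pt0, pt1, pt2, neg_neg]
  have hC2f : ∀ x : E3, ((R1*S*R1)*(R1*S*R1)) x = pt (x 2) (x 0) (x 1) := by
    intro x; rw [mul_app, hCf, hCf]; simp
  have hD2f : ∀ x : E3, (S*R1*S*R1*S) x = pt (-(x 0)) (x 1) (-(x 2)) := by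
    intro x; simp only [mul_app, hR1, hS, pt0, pt1, pt2, neg_neg]
  have hNf : ∀ x : E3, (R1*(S*R1*S*R1*S)) x = -x := by
    intro x
    simp only [mul_app, hR1, hS, pt0, pt1, pt2, neg_neg]
    ext i; fin_cases i <;> simp [pt]
  -- rotT memberships
  have hSrot : S ∈ rotT := by
    apply mem_rotT_of S !![0,-1,0;0,0,-1;1,0,0]
    · intro x; rw [hS]; norm_num [Matrix.vecHead, Matrix.vecTail, Matrix.cons_val_two]
    · norm_num [Matrix.det_fin_three, Matrix.cons_val_two]
    · have e1 : S (pt 1 1 1) = pt (-1) (-1) 1 := by rw [hS]; norm_num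
      have e2 : S (pt 1 (-1) (-1)) = pt 1 1 1 := by rw [hS]; norm_num
      have e3 : S (pt (-1) 1 (-1)) = pt (-1) 1 (-1) := by rw [hS]; norm_num
      have e4 : S (pt (-1) (-1) 1) = pt 1 (-1) (-1) := by rw [hS]; norm_num
      simp only [tetT, Set.image_insert_eq, Set.image_singleton, e1, e2, e3, e4]
      ext y; simp; tauto
  have hCrot : R1*S*R1 ∈ rotT := by
    apply mem_rotT_of _ !![0,1,0;0,0,1;1,0,0]
    · intro x; rw [hCf]; norm_num [Matrix.vecHead, Matrix.vecTail, Matrix.cons_val_two]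
    · norm_num [Matrix.det_fin_three, Matrix.cons_val_two]
    · have e1 : (R1*S*R1) (pt 1 1 1) = pt 1 1 1 := by rw [hCf]; norm_num
      have e2 : (R1*S*R1) (pt 1 (-1) (-1)) = pt (-1) (-1) 1 := by rw [hCf]; norm_num
      have e3 : (R1*S*R1) (pt (-1) 1 (-1)) = pt 1 (-1) (-1) := by rw [hCf]; norm_num
      have e4 : (R1*S*R1) (pt (-1) (-1) 1) = pt (-1) 1 (-1) := by rw [hCf]; norm_num
      simp only [tetT, Set.image_insert_eq, Set.image_singleton, e1, e2, e3, e4]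
      ext y; simp; tauto
  have hD2rot : S*R1*S*R1*S ∈ rotT := by
    apply mem_rotT_of _ !![-1,0,0;0,1,0;0,0,-1]
    · intro x; rw [hD2f]; norm_num [Matrix.vecHead, Matrix.vecTail, Matrix.cons_val_two]
    · norm_num [Matrix.det_fin_three, Matrix.cons_val_two]
    · have e1 : (S*R1*S*R1*S) (pt 1 1 1) = pt (-1) 1 (-1) := by rw [hD2f]; norm_num
      have e2 : (S*R1*S*R1*S) (pt 1 (-1) (-1)) = pt (-1) (-1) 1 := by rw [hD2f]; norm_num
      have e3 : (S*R1*S*R1*S) (pt (-1) 1 (-1)) = pt 1 1 1 := by rw [hD2f]; norm_num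
      have e4 : (S*R1*S*R1*S) (pt (-1) (-1) 1) = pt 1 (-1) (-1) := by rw [hD2f]; norm_num
      simp only [tetT, Set.image_insert_eq, Set.image_singleton, e1, e2, e3, e4]
      ext y; simp; tauto
  have hS2rot : S*S ∈ rotT := rot_mul hSrot hSrot
  have hC2rot : (R1*S*R1)*(R1*S*R1) ∈ rotT := rot_mul hCrot hCrot
  have h1app : ∀ x : E3, (1 : E3 ≃ₗᵢ[ℝ] E3) x = x := fun _ => rfl
  -- values needed for the chain
  have hv_S_p2 : S (pt 1 (-1) (-1)) = pt 1 1 1 := by rw [hS]; norm_num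
  have hv_S2_p4 : (S*S) (pt (-1) (-1) 1) = pt 1 1 1 := by rw [hS2f]; norm_num
  have hv_D2_p3 : (S*R1*S*R1*S) (pt (-1) 1 (-1)) = pt 1 1 1 := by rw [hD2f]; norm_num
  have hv_C_p1 : (R1*S*R1) (pt 1 1 1) = pt 1 1 1 := by rw [hCf]; norm_num
  have hv_C_p3 : (R1*S*R1) (pt (-1) 1 (-1)) = pt 1 (-1) (-1) := by rw [hCf]; norm_num
  have hv_C2_p1 : ((R1*S*R1)*(R1*S*R1)) (pt 1 1 1) = pt 1 1 1 := by rw [hC2f]; norm_num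
  have hv_C2_p4 : ((R1*S*R1)*(R1*S*R1)) (pt (-1) (-1) 1) = pt 1 (-1) (-1) := by
    rw [hC2f]; norm_num
  -- inverse pair identities
  have hSS1 : S * (S*S) = 1 := by
    ext1 x
    rw [mul_app, hS2f, hS, h1app]
    conv_rhs => rw [pt_eta x]
    norm_num
  have hS2S : (S*S) * S = 1 := by
    ext1 x
    rw [mul_app, hS, hS2f, h1app]
    conv_rhs => rw [pt_eta x]
    norm_num
  have hD2D2 : (S*R1*S*R1*S) * (S*R1*S*R1*S) = 1 := by
    ext1 x
    rw [mul_app, hD2f, hD2f, h1app]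
    conv_rhs => rw [pt_eta x]
    norm_num
  have hCC2 : (R1*S*R1) * ((R1*S*R1)*(R1*S*R1)) = 1 := by
    ext1 x
    rw [mul_app, hC2f, hCf, h1app]
    conv_rhs => rw [pt_eta x]
    norm_num
  have hC2C : ((R1*S*R1)*(R1*S*R1)) * (R1*S*R1) = 1 := by
    ext1 x
    rw [mul_app, hCf, hC2f, h1app]
    conv_rhs => rw [pt_eta x]
    norm_num
  -- the element vectors
  set hsv : Fin 4 → (E3 ≃ₗᵢ[ℝ] E3) := ![1, S, S*S, S*R1*S*R1*S] with hsvdef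
  set ksv : Fin 3 → (E3 ≃ₗᵢ[ℝ] E3) := ![1, R1*S*R1, (R1*S*R1)*(R1*S*R1)] with hksvdef
  set nsv : Fin 2 → (E3 ≃ₗᵢ[ℝ] E3) := ![1, R1*(S*R1*S*R1*S)] with hnsvdef
  set f : Fin 2 × Fin 4 × Fin 3 → (E3 ≃ₗᵢ[ℝ] E3) :=
    fun p => nsv p.1 * (hsv p.2.1 * ksv p.2.2) with hfdef
  -- step: an element of rotT fixing p1 and p2 is the identity
  have final : ∀ B : E3 ≃ₗᵢ[ℝ] E3, B ∈ rotT → B (pt 1 1 1) = pt 1 1 1 →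
      B (pt 1 (-1) (-1)) = pt 1 (-1) (-1) → B = 1 := by
    intro B hB h1 h2
    have h3mem : B (pt (-1) 1 (-1)) ∈ tetT := hB.2 ▸ Set.mem_image_of_mem _ p3_mem
    simp only [tetT, Set.mem_insert_iff, Set.mem_singleton_iff] at h3mem
    rcases h3mem with h3 | h3 | h3 | h3
    · exact absurd (B.injective (h3.trans h1.symm)) p3_ne_p1
    · exact absurd (B.injective (h3.trans h2.symm)) p3_ne_p2
    · exact ext_of_tet B 1 h1 h2 h3
    · exfalso
      have hform : ∀ (x : E3) (i : Fin 3), B x i =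
          !![(1:ℝ),0,0;0,0,1;0,1,0] i 0 * x 0 + !![(1:ℝ),0,0;0,0,1;0,1,0] i 1 * x 1 +
          !![(1:ℝ),0,0;0,0,1;0,1,0] i 2 * x 2 := by
        intro x i
        rw [apply_decomp B x, h1, h2, h3]
        fin_cases i <;>
          simp [pt, Matrix.vecHead, Matrix.vecTail, PiLp.add_apply, PiLp.smul_apply] <;> ring
      have hdet := det_of_formula B _ hform
      rw [det_eq_one_of_rotT hB] at hdet
      norm_num [Matrix.det_fin_three, Matrix.vecHead, Matrix.vecTail, Matrix.cons_val_two] at hdet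
  -- step: an element of rotT fixing p1 is one of the ksv
  have step2 : ∀ B : E3 ≃ₗᵢ[ℝ] E3, B ∈ rotT → B (pt 1 1 1) = pt 1 1 1 →
      ∃ j : Fin 3, B = ksv j := by
    intro B hB h1
    have h2mem : B (pt 1 (-1) (-1)) ∈ tetT := hB.2 ▸ Set.mem_image_of_mem _ p2_mem
    simp only [tetT, Set.mem_insert_iff, Set.mem_singleton_iff] at h2mem
    rcases h2mem with h2 | h2 | h2 | h2
    · exact absurd (B.injective (h2.trans h1.symm)) p2_ne_p1
    · exact ⟨0, final B hB h1 h2⟩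
    · -- B p2 = p3 : compose with C
      refine ⟨2, ?_⟩
      have hCB : (R1*S*R1) * B = 1 := by
        apply final _ (rot_mul hCrot hB)
        · rw [mul_app, h1, hv_C_p1]
        · rw [mul_app, h2, hv_C_p3]
      have hBeq : B = ((R1*S*R1))⁻¹ := eq_inv_of_mul_eq_one_right hCB
      rw [hBeq, inv_eq_of_mul_eq_one_right hCC2]
      rfl
    · -- B p2 = p4 : compose with C²
      refine ⟨1, ?_⟩
      have hCB : ((R1*S*R1)*(R1*S*R1)) * B = 1 := by
        apply final _ (rot_mul hC2rot hB)
        · rw [mul_app, h1, hv_C2_p1]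
        · rw [mul_app, h2, hv_C2_p4]
      have hBeq : B = ((R1*S*R1)*(R1*S*R1))⁻¹ := eq_inv_of_mul_eq_one_right hCB
      rw [hBeq, inv_eq_of_mul_eq_one_right hC2C]
      rfl
  -- classification of rotT
  have classify : ∀ A : E3 ≃ₗᵢ[ℝ] E3, A ∈ rotT → ∃ i j, A = hsv i * ksv j := by
    intro A hA
    have h1mem : A (pt 1 1 1) ∈ tetT := hA.2 ▸ Set.mem_image_of_mem _ p1_mem
    simp only [tetT, Set.mem_insert_iff, Set.mem_singleton_iff] at h1mem
    rcases h1mem with h1 | h1 | h1 | h1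
    · obtain ⟨j, hj⟩ := step2 A hA h1
      exact ⟨0, j, by rw [show hsv 0 = 1 from rfl, one_mul]; exact hj⟩
    · obtain ⟨j, hj⟩ := step2 (S * A) (rot_mul hSrot hA) (by rw [mul_app, h1, hv_S_p2])
      refine ⟨2, j, ?_⟩
      show A = (S*S) * ksv j
      have : A = S⁻¹ * ksv j := by rw [← hj, inv_mul_cancel_left]
      rwa [inv_eq_of_mul_eq_one_right hSS1] at this
    · obtain ⟨j, hj⟩ := step2 ((S*R1*S*R1*S) * A) (rot_mul hD2rot hA)
        (by rw [mul_app, h1, hv_D2_p3])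
      refine ⟨3, j, ?_⟩
      show A = (S*R1*S*R1*S) * ksv j
      have : A = (S*R1*S*R1*S)⁻¹ * ksv j := by rw [← hj, inv_mul_cancel_left]
      rwa [inv_eq_of_mul_eq_one_right hD2D2] at this
    · obtain ⟨j, hj⟩ := step2 ((S*S) * A) (rot_mul hS2rot hA) (by rw [mul_app, h1, hv_S2_p4])
      refine ⟨1, j, ?_⟩
      show A = S * ksv j
      have : A = (S*S)⁻¹ * ksv j := by rw [← hj, inv_mul_cancel_left]
      rwa [inv_eq_of_mul_eq_one_right hS2S] at this
  
  have hhs : ∀ i, hsv i ∈ rotT := by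
    intro i; fin_cases i
    exacts [rot_one, hSrot, hS2rot, hD2rot]
  have hks : ∀ j, ksv j ∈ rotT := by
    intro j; fin_cases j
    exacts [rot_one, hCrot, hC2rot]
  have hrange : tet33star = Set.range f := by
    apply Set.Subset.antisymm
    · rintro B (hB | ⟨A, hA, hBA⟩)
      · obtain ⟨i, j, h⟩ := classify B hB
        exact ⟨(0, i, j), by show (1 : _) * (hsv i * ksv j) = B; rw [one_mul]; exact h.symm⟩
      · obtain ⟨i, j, h⟩ := classify A hA
        refine ⟨(1, i, j), ?_⟩
        show (R1*(S*R1*S*R1*S)) * (hsv i * ksv j) = B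
        rw [← h]
        ext1 x
        rw [mul_app, hNf, hBA]
    · rintro B ⟨⟨a, i, j⟩, rfl⟩
      fin_cases a
      · left
        show (1 : _) * (hsv i * ksv j) ∈ rotT
        rw [one_mul]; exact rot_mul (hhs i) (hks j)
      · right
        refine ⟨hsv i * ksv j, rot_mul (hhs i) (hks j), fun x => ?_⟩
        show ((R1*(S*R1*S*R1*S)) * (hsv i * ksv j)) x = -((hsv i * ksv j) x)
        rw [mul_app, hNf]
  have hR1c : R1 ∈ Subgroup.closure ({R1, S} : Set (E3 ≃ₗᵢ[ℝ] E3)) :=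
    Subgroup.subset_closure (by simp)
  have hSc : S ∈ Subgroup.closure ({R1, S} : Set (E3 ≃ₗᵢ[ℝ] E3)) :=
    Subgroup.subset_closure (by simp)
  have hfc : ∀ p, f p ∈ Subgroup.closure ({R1, S} : Set (E3 ≃ₗᵢ[ℝ] E3)) := by
    rintro ⟨a, i, j⟩
    refine mul_mem ?_ (mul_mem ?_ ?_)
    · fin_cases a
      exacts [one_mem _,
        mul_mem hR1c (mul_mem (mul_mem (mul_mem (mul_mem hSc hR1c) hSc) hR1c) hSc)]
    · fin_cases i
      exacts [one_mem _, hSc, mul_mem hSc hSc,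
        mul_mem (mul_mem (mul_mem (mul_mem hSc hR1c) hSc) hR1c) hSc]
    · fin_cases j
      exacts [one_mem _, mul_mem (mul_mem hR1c hSc) hR1c,
        mul_mem (mul_mem (mul_mem hR1c hSc) hR1c) (mul_mem (mul_mem hR1c hSc) hR1c)]
  have hNN : (R1*(S*R1*S*R1*S)) * (R1*(S*R1*S*R1*S)) = 1 := by
    ext1 x; rw [mul_app, hNf, hNf, neg_neg, h1app]
  have hNcomm : ∀ A : E3 ≃ₗᵢ[ℝ] E3, A * (R1*(S*R1*S*R1*S)) = (R1*(S*R1*S*R1*S)) * A := by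
    intro A; ext1 x
    show A ((R1*(S*R1*S*R1*S)) x) = (R1*(S*R1*S*R1*S)) (A x)
    rw [hNf x, hNf (A x)]
    exact map_neg A x
  have hstar_iff : ∀ B : E3 ≃ₗᵢ[ℝ] E3, (∃ A ∈ rotT, ∀ x : E3, B x = -(A x)) ↔
      ∃ A ∈ rotT, B = (R1*(S*R1*S*R1*S)) * A := by
    intro B
    constructor
    · rintro ⟨A, hA, hBA⟩
      exact ⟨A, hA, by ext1 x; rw [hBA, mul_app, hNf]⟩
    · rintro ⟨A, hA, rfl⟩
      exact ⟨A, hA, fun x => by rw [mul_app, hNf]⟩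
  have hmulstar : ∀ B B' : E3 ≃ₗᵢ[ℝ] E3, B ∈ tet33star → B' ∈ tet33star →
      B * B' ∈ tet33star := by
    intro B B' hB hB'
    rcases hB with hB | hB <;> rcases hB' with hB' | hB'
    · exact Or.inl (rot_mul hB hB')
    · obtain ⟨A', hA', rfl⟩ := (hstar_iff B').1 hB'
      refine Or.inr ((hstar_iff _).2 ⟨B * A', rot_mul hB hA', ?_⟩)
      rw [← mul_assoc, hNcomm B, mul_assoc]
    · obtain ⟨A, hA, rfl⟩ := (hstar_iff B).1 hB
      refine Or.inr ((hstar_iff _).2 ⟨A * B', rot_mul hA hB', ?_⟩)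
      rw [mul_assoc]
    · obtain ⟨A, hA, rfl⟩ := (hstar_iff B).1 hB
      obtain ⟨A', hA', rfl⟩ := (hstar_iff B').1 hB'
      left
      have hc : ((R1*(S*R1*S*R1*S)) * A) * ((R1*(S*R1*S*R1*S)) * A') =
          ((R1*(S*R1*S*R1*S)) * (R1*(S*R1*S*R1*S))) * (A * A') := by
        rw [mul_assoc, ← mul_assoc A, hNcomm A,
          mul_assoc (R1*(S*R1*S*R1*S)) A A', ← mul_assoc]
      rw [hc, hNN, one_mul]
      exact rot_mul hA hA'
  have hinvstar : ∀ B : E3 ≃ₗᵢ[ℝ] E3, B ∈ tet33star → B⁻¹ ∈ tet33star := by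
    intro B hB
    rcases hB with hB | hB
    · exact Or.inl (rot_inv hB)
    · obtain ⟨A, hA, rfl⟩ := (hstar_iff B).1 hB
      refine Or.inr ((hstar_iff _).2 ⟨A⁻¹, rot_inv hA, ?_⟩)
      rw [mul_inv_rev, inv_eq_of_mul_eq_one_right hNN, hNcomm]
  constructor
  · apply Set.Subset.antisymm
    · intro B hB
      have hB' : B ∈ Subgroup.closure ({R1, S} : Set (E3 ≃ₗᵢ[ℝ] E3)) := hB
      refine Subgroup.closure_induction ?_ ?_ ?_ ?_ hB'
      · have hR1star : R1 ∈ tet33star := by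
          right
          refine ⟨S*R1*S*R1*S, hD2rot, fun x => ?_⟩
          rw [hR1, hD2f]
          ext i; fin_cases i <;> simp [pt]
        rintro x hx
        rcases hx with hx | hx
        · rw [hx]; exact hR1star
        · rw [hx]; exact Or.inl hSrot
      · exact Or.inl rot_one
      · exact fun x y _ _ hx hy => hmulstar x y hx hy
      · exact fun x _ hx => hinvstar x hx
    · intro B hB
      rw [hrange] at hB
      obtain ⟨p, rfl⟩ := hB
      exact hfc p
  · have hv : ∀ (a : Fin 2) (i : Fin 4) (j : Fin 3),
        f (a, i, j) (pt 1 2 3) = fun k => ((tv a i j k : ℤ) : ℝ) := by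
      intro a i j
      fin_cases a <;> fin_cases i <;> fin_cases j <;>
        · funext k
          fin_cases k <;>
            (norm_num [hfdef, hsvdef, hksvdef, hnsvdef, mul_app, h1app, hS, hR1, tv, tbl,
              Matrix.vecHead, Matrix.vecTail]
             <;> try rfl)
    have hinj : Function.Injective f := by
      rintro ⟨a, i, j⟩ ⟨a', i', j'⟩ h
      have hval : (f (a,i,j) (pt 1 2 3)).ofLp = (f (a',i',j') (pt 1 2 3)).ofLp := by rw [h]
      rw [hv a i j, hv a' i' j'] at hval
      have htv : tv a i j = tv a' i' j' :=
        funext fun k => Int.cast_injective (congrFun hval k)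
      obtain ⟨rfl, rfl, rfl⟩ := tv_inj a i j a' i' j' htv
      rfl
    rw [hrange, Nat.card_range_of_injective hinj]
    simp
end
end

section
/- Fix a real number a ≠ 0 and let G be the subgroup of isometries of ℝ³ generated by the four maps R₀(x,y,z) = (−z, −y + a, −x), R₁(x,y,z) = (y, x, z), R̂₂(x,y,z) = (−x, y, z), R̃₂(x,y,z) = (x, y, −z). Then the orbit of the origin under G (the vertex set of the regular complex K₅(1,2)) equals aℤ³ \ ((0,0,a) + aΛ_{(1,1,1)}); explicitly, it is the set of points (am₁, am₂, am₃) with m₁, m₂, m₃ ∈ ℤ such that it is NOT the case that m₁ ≡ m₂ (mod 2) and m₃ ≡ m₁ + 1 (mod 2). -/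
/- STATEMENT 14: For a ≠ 0, the orbit of the origin under the group generated by
R₀(x,y,z) = (−z, −y + a, −x), R₁(x,y,z) = (y, x, z), R̂₂(x,y,z) = (−x, y, z),
R̃₂(x,y,z) = (x, y, −z) (the vertex set of K₅(1,2)) equals
aℤ³ \ ((0,0,a) + aΛ_{(1,1,1)}): the points (am₁, am₂, am₃), mᵢ ∈ ℤ, such that it is NOT
the case that m₁ ≡ m₂ (mod 2) and m₃ ≡ m₁ + 1 (mod 2). -/

noncomputable section

theorem vertex_set_K5_12
    (a : ℝ) (ha : a ≠ 0)
    (R0 R1 R2' R2'' : E3 ≃ᵢ E3)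
    (hR0 : ∀ x : E3, R0 x = pt (-(x 2)) (-(x 1) + a) (-(x 0)))
    (hR1 : ∀ x : E3, R1 x = pt (x 1) (x 0) (x 2))
    (hR2' : ∀ x : E3, R2' x = pt (-(x 0)) (x 1) (x 2))
    (hR2'' : ∀ x : E3, R2'' x = pt (x 0) (x 1) (-(x 2))) :
    {y : E3 | ∃ g ∈ Subgroup.closure {R0, R1, R2', R2''}, g 0 = y} =
      {y : E3 | ∃ m1 m2 m3 : ℤ, y 0 = a * m1 ∧ y 1 = a * m2 ∧ y 2 = a * m3 ∧
        ¬ (Int.ModEq 2 m1 m2 ∧ Int.ModEq 2 m3 (m1 + 1))} := by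
  have p0 : ∀ u v w : ℝ, (pt u v w) 0 = u := fun _ _ _ => rfl
  have p1 : ∀ u v w : ℝ, (pt u v w) 1 = v := fun _ _ _ => rfl
  have p2 : ∀ u v w : ℝ, (pt u v w) 2 = w := fun _ _ _ => rfl
  have ptE : ∀ {x y z x' y' z' : ℝ}, x = x' → y = y' → z = z' →
      pt x y z = pt x' y' z' := by intro _ _ _ _ _ _ h1 h2 h3; rw [h1, h2, h3]
  -- abbreviation for the condition
  set C : ℤ → ℤ → ℤ → Prop :=
    fun m1 m2 m3 => ¬ (Int.ModEq 2 m1 m2 ∧ Int.ModEq 2 m3 (m1 + 1)) with hC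
  have e0 : (0 : E3) = pt (a*((0:ℤ):ℝ)) (a*((0:ℤ):ℝ)) (a*((0:ℤ):ℝ)) := by
    ext i; fin_cases i <;> simp [pt]
  ext y
  simp only [Set.mem_setOf_eq]
  constructor
  · rintro ⟨g, hg, rfl⟩
    -- the invariance predicate
    set Q : (E3 ≃ᵢ E3) → Prop := fun g =>
      ∀ m1 m2 m3 : ℤ, C m1 m2 m3 →
        ∃ n1 n2 n3 : ℤ, g (pt (a*m1) (a*m2) (a*m3)) = pt (a*n1) (a*n2) (a*n3)
          ∧ C n1 n2 n3 with hQ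
    have Q0 : Q R0 := by
      intro m1 m2 m3 hc
      refine ⟨-m3, 1 - m2, -m1, ?_, ?_⟩
      · rw [hR0]; simp only [p0, p1, p2]
        exact ptE (by push_cast; ring) (by push_cast; ring) (by push_cast; ring)
      · simp only [hC, Int.ModEq] at hc ⊢; omega
    have Q1 : Q R1 := by
      intro m1 m2 m3 hc
      refine ⟨m2, m1, m3, ?_, ?_⟩
      · rw [hR1]; simp only [p0, p1, p2]
      · simp only [hC, Int.ModEq] at hc ⊢; omega
    have Q2 : Q R2' := by
      intro m1 m2 m3 hc
      refine ⟨-m1, m2, m3, ?_, ?_⟩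
      · rw [hR2']; simp only [p0, p1, p2]
        exact ptE (by push_cast; ring) rfl rfl
      · simp only [hC, Int.ModEq] at hc ⊢; omega
    have Q3 : Q R2'' := by
      intro m1 m2 m3 hc
      refine ⟨m1, m2, -m3, ?_, ?_⟩
      · rw [hR2'']; simp only [p0, p1, p2]
        exact ptE rfl rfl (by push_cast; ring)
      · simp only [hC, Int.ModEq] at hc ⊢; omega
    -- each generator is an involution
    have i0 : R0⁻¹ = R0 := by
      refine inv_eq_of_mul_eq_one_right (IsometryEquiv.ext fun x => ?_)
      show R0 (R0 x) = x
      rw [hR0 x, hR0]; simp only [p0, p1, p2]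
      ext i; fin_cases i <;> simp [pt] <;> ring
    have i1 : R1⁻¹ = R1 := by
      refine inv_eq_of_mul_eq_one_right (IsometryEquiv.ext fun x => ?_)
      show R1 (R1 x) = x
      rw [hR1 x, hR1]; simp only [p0, p1, p2]
      ext i; fin_cases i <;> simp [pt]
    have i2 : R2'⁻¹ = R2' := by
      refine inv_eq_of_mul_eq_one_right (IsometryEquiv.ext fun x => ?_)
      show R2' (R2' x) = x
      rw [hR2' x, hR2']; simp only [p0, p1, p2]
      ext i; fin_cases i <;> simp [pt]
    have i3 : R2''⁻¹ = R2'' := by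
      refine inv_eq_of_mul_eq_one_right (IsometryEquiv.ext fun x => ?_)
      show R2'' (R2'' x) = x
      rw [hR2'' x, hR2'']; simp only [p0, p1, p2]
      ext i; fin_cases i <;> simp [pt]
    have key : Q g ∧ Q g⁻¹ := by
      refine Subgroup.closure_induction (p := fun g _ => Q g ∧ Q g⁻¹)
        ?_ ?_ ?_ ?_ hg
      · intro x hx
        simp only [Set.mem_insert_iff, Set.mem_singleton_iff] at hx
        rcases hx with rfl | rfl | rfl | rfl
        · exact ⟨Q0, by rw [i0]; exact Q0⟩
        · exact ⟨Q1, by rw [i1]; exact Q1⟩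
        · exact ⟨Q2, by rw [i2]; exact Q2⟩
        · exact ⟨Q3, by rw [i3]; exact Q3⟩
      · constructor <;>
        · intro m1 m2 m3 hc
          exact ⟨m1, m2, m3, by simp, hc⟩
      · intro x y _ _ hx hy
        constructor
        · intro m1 m2 m3 hc
          obtain ⟨n1, n2, n3, he, hc'⟩ := hy.1 m1 m2 m3 hc
          obtain ⟨k1, k2, k3, he2, hc''⟩ := hx.1 n1 n2 n3 hc'
          refine ⟨k1, k2, k3, ?_, hc''⟩
          show x (y _) = _
          rw [he, he2]
        · rw [mul_inv_rev]
          intro m1 m2 m3 hc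
          obtain ⟨n1, n2, n3, he, hc'⟩ := hx.2 m1 m2 m3 hc
          obtain ⟨k1, k2, k3, he2, hc''⟩ := hy.2 n1 n2 n3 hc'
          refine ⟨k1, k2, k3, ?_, hc''⟩
          show y⁻¹ (x⁻¹ _) = _
          rw [he, he2]
      · intro x _ hx
        exact ⟨hx.2, by rw [inv_inv]; exact hx.1⟩
    obtain ⟨n1, n2, n3, he, hc⟩ := key.1 0 0 0 (by
      simp only [hC, Int.ModEq]; omega)
    refine ⟨n1, n2, n3, ?_, ?_, ?_, hc⟩
    · rw [e0, he, p0]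
    · rw [e0, he, p1]
    · rw [e0, he, p2]
  · rintro ⟨m1, m2, m3, h1, h2, h3, hcond⟩
    have hy : y = pt (a*m1) (a*m2) (a*m3) := by
      ext i; fin_cases i <;> simp [pt] <;> first | exact h1 | exact h2 | exact h3
    rw [hy]
    set P : ℝ → ℝ → ℝ → Prop := fun x y z =>
      ∃ g ∈ Subgroup.closure {R0, R1, R2', R2''}, g 0 = pt x y z with hP
    show P (a*m1) (a*m2) (a*m3)
    have hPeq : ∀ {x y z x' y' z' : ℝ}, P x y z → x = x' → y = y' → z = z' →
        P x' y' z' := by intro _ _ _ _ _ _ h e1 e2 e3; rwa [← e1, ← e2, ← e3]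
    have hA : ∀ x y z : ℝ, P x y z → P (-z) (-y + a) (-x) := by
      rintro x y z ⟨g, hg, hgp⟩
      refine ⟨R0 * g, mul_mem (Subgroup.subset_closure (by simp)) hg, ?_⟩
      show R0 (g 0) = _
      rw [hgp, hR0]; simp only [p0, p1, p2]
    have hB : ∀ x y z : ℝ, P x y z → P y x z := by
      rintro x y z ⟨g, hg, hgp⟩
      refine ⟨R1 * g, mul_mem (Subgroup.subset_closure (by simp)) hg, ?_⟩
      show R1 (g 0) = _
      rw [hgp, hR1]; simp only [p0, p1, p2]
    have hCm : ∀ x y z : ℝ, P x y z → P (-x) y z := by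
      rintro x y z ⟨g, hg, hgp⟩
      refine ⟨R2' * g, mul_mem (Subgroup.subset_closure (by simp)) hg, ?_⟩
      show R2' (g 0) = _
      rw [hgp, hR2']; simp only [p0, p1, p2]
    have negY : ∀ x y z : ℝ, P x y z → P x (-y) z := fun x y z h =>
      hB _ _ _ (hCm _ _ _ (hB _ _ _ h))
    have tYp : ∀ x y z : ℝ, P x y z → P x (y + 2*a) z := by
      intro x y z h
      exact hPeq (hA _ _ _ (negY _ _ _ (hA _ _ _ (negY _ _ _ h))))
        (by ring) (by ring) (by ring)
    have tYm : ∀ x y z : ℝ, P x y z → P x (y - 2*a) z := by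
      intro x y z h
      exact hPeq (negY _ _ _ (hA _ _ _ (negY _ _ _ (hA _ _ _ h))))
        (by ring) (by ring) (by ring)
    have tXp : ∀ x y z : ℝ, P x y z → P (x + 2*a) y z := fun x y z h =>
      hB _ _ _ (tYp _ _ _ (hB _ _ _ h))
    have tXm : ∀ x y z : ℝ, P x y z → P (x - 2*a) y z := fun x y z h =>
      hB _ _ _ (tYm _ _ _ (hB _ _ _ h))
    have tZm : ∀ x y z : ℝ, P x y z → P x y (z - 2*a) := by
      intro x y z h
      exact hPeq (hA _ _ _ (tXp _ _ _ (hA _ _ _ h))) (by ring) (by ring) (by ring)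
    have tZp : ∀ x y z : ℝ, P x y z → P x y (z + 2*a) := by
      intro x y z h
      exact hPeq (hA _ _ _ (tXm _ _ _ (hA _ _ _ h))) (by ring) (by ring) (by ring)
    have tX : ∀ (k : ℤ) (x y z : ℝ), P x y z → P (x + 2*a*k) y z := by
      intro k
      induction k using Int.induction_on with
      | zero => intro x y z h; exact hPeq h (by push_cast; ring) rfl rfl
      | succ n ih => intro x y z h
                     exact hPeq (tXp _ _ _ (ih x y z h)) (by push_cast; ring) rfl rfl
      | pred n ih => intro x y z h
                     exact hPeq (tXm _ _ _ (ih x y z h)) (by push_cast; ring) rfl rfl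
    have tY : ∀ (k : ℤ) (x y z : ℝ), P x y z → P x (y + 2*a*k) z := by
      intro k
      induction k using Int.induction_on with
      | zero => intro x y z h; exact hPeq h rfl (by push_cast; ring) rfl
      | succ n ih => intro x y z h
                     exact hPeq (tYp _ _ _ (ih x y z h)) rfl (by push_cast; ring) rfl
      | pred n ih => intro x y z h
                     exact hPeq (tYm _ _ _ (ih x y z h)) rfl (by push_cast; ring) rfl
    have tZ : ∀ (k : ℤ) (x y z : ℝ), P x y z → P x y (z + 2*a*k) := by
      intro k
      induction k using Int.induction_on with
      | zero => intro x y z h; exact hPeq h rfl rfl (by push_cast; ring)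
      | succ n ih => intro x y z h
                     exact hPeq (tZp _ _ _ (ih x y z h)) rfl rfl (by push_cast; ring)
      | pred n ih => intro x y z h
                     exact hPeq (tZm _ _ _ (ih x y z h)) rfl rfl (by push_cast; ring)
    -- base points
    have b000 : P 0 0 0 := ⟨1, one_mem _, by
      show (0 : E3) = pt 0 0 0
      ext i; fin_cases i <;> simp [pt]⟩
    have b010 : P 0 a 0 :=
      hPeq (hA 0 0 0 b000) (by ring) (by ring) (by ring)
    have b100 : P a 0 0 := hB _ _ _ b010
    have b011 : P 0 a (-a) :=
      hPeq (hA _ _ _ b100) (by ring) (by ring) rfl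
    have b101 : P a 0 (-a) := hB _ _ _ b011
    have b111 : P a a (-a) :=
      hPeq (hA _ _ _ b101) (by ring) (by ring) rfl
    rcases Int.even_or_odd m1 with ⟨c1, hc1⟩ | ⟨c1, hc1⟩ <;>
      rcases Int.even_or_odd m2 with ⟨c2, hc2⟩ | ⟨c2, hc2⟩ <;>
      rcases Int.even_or_odd m3 with ⟨c3, hc3⟩ | ⟨c3, hc3⟩
    · exact hPeq (tX c1 _ _ _ (tY c2 _ _ _ (tZ c3 _ _ _ b000)))
        (by rw [hc1]; push_cast; ring) (by rw [hc2]; push_cast; ring)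
        (by rw [hc3]; push_cast; ring)
    · exact absurd ⟨by simp only [Int.ModEq]; omega, by simp only [Int.ModEq]; omega⟩ hcond
    · exact hPeq (tX c1 _ _ _ (tY c2 _ _ _ (tZ c3 _ _ _ b010)))
        (by rw [hc1]; push_cast; ring) (by rw [hc2]; push_cast; ring)
        (by rw [hc3]; push_cast; ring)
    · exact hPeq (tX c1 _ _ _ (tY c2 _ _ _ (tZ (c3+1) _ _ _ b011)))
        (by rw [hc1]; push_cast; ring) (by rw [hc2]; push_cast; ring)
        (by rw [hc3]; push_cast; ring)
    · exact hPeq (tX c1 _ _ _ (tY c2 _ _ _ (tZ c3 _ _ _ b100)))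
        (by rw [hc1]; push_cast; ring) (by rw [hc2]; push_cast; ring)
        (by rw [hc3]; push_cast; ring)
    · exact hPeq (tX c1 _ _ _ (tY c2 _ _ _ (tZ (c3+1) _ _ _ b101)))
        (by rw [hc1]; push_cast; ring) (by rw [hc2]; push_cast; ring)
        (by rw [hc3]; push_cast; ring)
    · exact absurd ⟨by simp only [Int.ModEq]; omega, by simp only [Int.ModEq]; omega⟩ hcond
    · exact hPeq (tX c1 _ _ _ (tY c2 _ _ _ (tZ (c3+1) _ _ _ b111)))
        (by rw [hc1]; push_cast; ring) (by rw [hc2]; push_cast; ring)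
        (by rw [hc3]; push_cast; ring)
end
end

section
/- Fix a real number a ≠ 0 and let G be the subgroup of isometries of ℝ³ generated by the four maps R₀(x,y,z) = (−z + a, −y − a, −x + a), R₁(x,y,z) = (y, x, z), R̂₂(x,y,z) = (−y, −x, z), R̃₂(x,y,z) = (x, −z, −y). Then the orbit of the origin under G (the vertex set of the regular complex K₇(1,2), whose edge graph is the diamond net) equals 2aΛ_{(1,1,0)} ∪ ((a, −a, a) + 2aΛ_{(1,1,0)}); explicitly, it consists of all points (2am₁, 2am₂, 2am₃) and all points (a + 2am₁, −a + 2am₂, a + 2am₃) with m₁, m₂, m₃ ∈ ℤ and m₁ + m₂ + m₃ even. -/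
/- STATEMENT 16: For a ≠ 0, the orbit of the origin under the group generated by
R₀(x,y,z) = (−z + a, −y − a, −x + a), R₁(x,y,z) = (y, x, z), R̂₂(x,y,z) = (−y, −x, z),
R̃₂(x,y,z) = (x, −z, −y) (the vertex set of K₇(1,2), whose edge graph is the diamond net)
equals 2aΛ_{(1,1,0)} ∪ ((a, −a, a) + 2aΛ_{(1,1,0)}). -/

noncomputable section

theorem vertex_set_K7_12
    (a : ℝ) (ha : a ≠ 0)
    (R0 R1 R2' R2'' : E3 ≃ᵢ E3)
    (hR0 : ∀ x : E3, R0 x = pt (-(x 2) + a) (-(x 1) - a) (-(x 0) + a))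
    (hR1 : ∀ x : E3, R1 x = pt (x 1) (x 0) (x 2))
    (hR2' : ∀ x : E3, R2' x = pt (-(x 1)) (-(x 0)) (x 2))
    (hR2'' : ∀ x : E3, R2'' x = pt (x 0) (-(x 2)) (-(x 1))) :
    {y : E3 | ∃ g ∈ Subgroup.closure {R0, R1, R2', R2''}, g 0 = y} =
      {y : E3 | (∃ m1 m2 m3 : ℤ, Even (m1 + m2 + m3) ∧
          y 0 = 2 * a * m1 ∧ y 1 = 2 * a * m2 ∧ y 2 = 2 * a * m3) ∨
        (∃ m1 m2 m3 : ℤ, Even (m1 + m2 + m3) ∧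
          y 0 = a + 2 * a * m1 ∧ y 1 = -a + 2 * a * m2 ∧ y 2 = a + 2 * a * m3)} := by
  have e0 : ∀ x y z : ℝ, pt x y z 0 = x := fun _ _ _ => rfl
  have e1 : ∀ x y z : ℝ, pt x y z 1 = y := fun _ _ _ => rfl
  have e2 : ∀ x y z : ℝ, pt x y z 2 = z := fun _ _ _ => rfl
  have ptext : ∀ {x y z x' y' z' : ℝ}, x = x' → y = y' → z = z' →
      pt x y z = pt x' y' z' := by rintro x y z _ _ _ rfl rfl rfl; rfl
  have ptself : ∀ y : E3, pt (y 0) (y 1) (y 2) = y := by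
    intro y; ext i; fin_cases i <;> rfl
  have mulapp : ∀ (f g : E3 ≃ᵢ E3) (x : E3), (f * g) x = f (g x) := fun _ _ _ => rfl
  set inS : E3 → Prop := fun y =>
      (∃ m1 m2 m3 : ℤ, Even (m1 + m2 + m3) ∧
          y 0 = 2 * a * m1 ∧ y 1 = 2 * a * m2 ∧ y 2 = 2 * a * m3) ∨
        (∃ m1 m2 m3 : ℤ, Even (m1 + m2 + m3) ∧
          y 0 = a + 2 * a * m1 ∧ y 1 = -a + 2 * a * m2 ∧ y 2 = a + 2 * a * m3) with hinS
  set H := Subgroup.closure {R0, R1, R2', R2''} with hHdef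
  -- generators are in H
  have m0 : R0 ∈ H := Subgroup.subset_closure (by simp)
  have m1' : R1 ∈ H := Subgroup.subset_closure (by simp)
  have mp : R2' ∈ H := Subgroup.subset_closure (by simp)
  have mq : R2'' ∈ H := Subgroup.subset_closure (by simp)
  ------------------------------------------------------------------
  -- Forward: every generator (hence every g ∈ H) preserves inS
  ------------------------------------------------------------------
  have pres0 : ∀ x : E3, inS x → inS (R0 x) := by
    rintro x (⟨n1, n2, n3, ⟨c, hc⟩, h0, h1, h2⟩ | ⟨n1, n2, n3, ⟨c, hc⟩, h0, h1, h2⟩)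
    · exact Or.inr ⟨-n3, -n2, -n1, ⟨-c, by omega⟩, by
        rw [hR0]; simp only [e0, e1, e2, h0, h1, h2]; push_cast; refine ⟨by ring, by ring, by ring⟩⟩
    · exact Or.inl ⟨-n3, -n2, -n1, ⟨-c, by omega⟩, by
        rw [hR0]; simp only [e0, e1, e2, h0, h1, h2]; push_cast; refine ⟨by ring, by ring, by ring⟩⟩
  have pres1 : ∀ x : E3, inS x → inS (R1 x) := by
    rintro x (⟨n1, n2, n3, ⟨c, hc⟩, h0, h1, h2⟩ | ⟨n1, n2, n3, ⟨c, hc⟩, h0, h1, h2⟩)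
    · exact Or.inl ⟨n2, n1, n3, ⟨c, by omega⟩, by
        rw [hR1]; simp only [e0, e1, e2, h0, h1, h2]; push_cast; refine ⟨trivial, trivial, trivial⟩⟩
    · exact Or.inr ⟨n2 - 1, n1 + 1, n3, ⟨c, by omega⟩, by
        rw [hR1]; simp only [e0, e1, e2, h0, h1, h2]; push_cast; refine ⟨by ring, by ring, trivial⟩⟩
  have presp : ∀ x : E3, inS x → inS (R2' x) := by
    rintro x (⟨n1, n2, n3, ⟨c, hc⟩, h0, h1, h2⟩ | ⟨n1, n2, n3, ⟨c, hc⟩, h0, h1, h2⟩)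
    · exact Or.inl ⟨-n2, -n1, n3, ⟨c - n1 - n2, by omega⟩, by
        rw [hR2']; simp only [e0, e1, e2, h0, h1, h2]; push_cast; refine ⟨by ring, by ring, trivial⟩⟩
    · exact Or.inr ⟨-n2, -n1, n3, ⟨c - n1 - n2, by omega⟩, by
        rw [hR2']; simp only [e0, e1, e2, h0, h1, h2]; push_cast; refine ⟨by ring, by ring, trivial⟩⟩
  have presq : ∀ x : E3, inS x → inS (R2'' x) := by
    rintro x (⟨n1, n2, n3, ⟨c, hc⟩, h0, h1, h2⟩ | ⟨n1, n2, n3, ⟨c, hc⟩, h0, h1, h2⟩)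
    · exact Or.inl ⟨n1, -n3, -n2, ⟨c - n2 - n3, by omega⟩, by
        rw [hR2'']; simp only [e0, e1, e2, h0, h1, h2]; push_cast; refine ⟨trivial, by ring, by ring⟩⟩
    · exact Or.inr ⟨n1, -n3, -n2, ⟨c - n2 - n3, by omega⟩, by
        rw [hR2'']; simp only [e0, e1, e2, h0, h1, h2]; push_cast; refine ⟨trivial, by ring, by ring⟩⟩
  -- generators are involutions
  have inv0 : R0⁻¹ = R0 := by
    refine inv_eq_of_mul_eq_one_left (IsometryEquiv.ext fun x => ?_)
    rw [mulapp, hR0 x, hR0]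
    conv_rhs => rw [show (1 : E3 ≃ᵢ E3) x = x from rfl, ← ptself x]
    refine ptext ?_ ?_ ?_ <;> simp only [e0, e1, e2] <;> first | rfl | ring
  have inv1 : R1⁻¹ = R1 := by
    refine inv_eq_of_mul_eq_one_left (IsometryEquiv.ext fun x => ?_)
    rw [mulapp, hR1 x, hR1]
    conv_rhs => rw [show (1 : E3 ≃ᵢ E3) x = x from rfl, ← ptself x]
    refine ptext ?_ ?_ ?_ <;> simp only [e0, e1, e2] <;> first | rfl | ring
  have invp : R2'⁻¹ = R2' := by
    refine inv_eq_of_mul_eq_one_left (IsometryEquiv.ext fun x => ?_)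
    rw [mulapp, hR2' x, hR2']
    conv_rhs => rw [show (1 : E3 ≃ᵢ E3) x = x from rfl, ← ptself x]
    refine ptext ?_ ?_ ?_ <;> simp only [e0, e1, e2] <;> first | rfl | ring
  have invq : R2''⁻¹ = R2'' := by
    refine inv_eq_of_mul_eq_one_left (IsometryEquiv.ext fun x => ?_)
    rw [mulapp, hR2'' x, hR2'']
    conv_rhs => rw [show (1 : E3 ≃ᵢ E3) x = x from rfl, ← ptself x]
    refine ptext ?_ ?_ ?_ <;> simp only [e0, e1, e2] <;> first | rfl | ring
  have hforward : ∀ g ∈ H, (∀ x, inS x → inS (g x)) ∧ (∀ x, inS x → inS (g⁻¹ x)) := by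
    intro g hg
    refine Subgroup.closure_induction ?_ ?_ ?_ ?_ hg
    · rintro x (rfl | rfl | rfl | rfl)
      · exact ⟨pres0, by rw [inv0]; exact pres0⟩
      · exact ⟨pres1, by rw [inv1]; exact pres1⟩
      · exact ⟨presp, by rw [invp]; exact presp⟩
      · exact ⟨presq, by rw [invq]; exact presq⟩
    · exact ⟨fun x hx => hx, fun x hx => by rw [inv_one]; exact hx⟩
    · rintro f g' _ _ ⟨hf1, hf2⟩ ⟨hg1, hg2⟩
      refine ⟨fun x hx => ?_, fun x hx => ?_⟩
      · rw [mulapp]; exact hf1 _ (hg1 _ hx)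
      · rw [mul_inv_rev, mulapp]; exact hg2 _ (hf2 _ hx)
    · rintro f _ ⟨hf1, hf2⟩
      exact ⟨hf2, fun x hx => by rw [inv_inv]; exact hf1 x hx⟩
  ------------------------------------------------------------------
  -- Reverse: translations in H
  ------------------------------------------------------------------
  set O : Set E3 := {y : E3 | ∃ g ∈ H, g 0 = y} with hO
  have stepgen : ∀ (τ : E3 ≃ᵢ E3), τ ∈ H →
      ∀ y ∈ O, τ y ∈ O := by
    rintro τ hτ y ⟨g, hg, rfl⟩
    exact ⟨τ * g, mul_mem hτ hg, by rw [mulapp]⟩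
  -- the six translation words
  have t1mem : (R0 * R1 * R2'' * R1 * R0 * R1 * R2'' * R1) ∈ H := mul_mem (mul_mem (mul_mem (mul_mem (mul_mem (mul_mem (mul_mem m0 m1') mq) m1') m0) m1') mq) m1'
  have t1mem' : (R1 * R2'' * R1 * R0 * R1 * R2'' * R1 * R0) ∈ H := mul_mem (mul_mem (mul_mem (mul_mem (mul_mem (mul_mem (mul_mem m1' mq) m1') m0) m1') mq) m1') m0
  have t2mem : (R1 * R0 * R1 * R2'' * R1 * R0 * R1 * R2'') ∈ H := mul_mem (mul_mem (mul_mem (mul_mem (mul_mem (mul_mem (mul_mem m1' m0) m1') mq) m1') m0) m1') mq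
  have t2mem' : (R2'' * R1 * R0 * R1 * R2'' * R1 * R0 * R1) ∈ H := mul_mem (mul_mem (mul_mem (mul_mem (mul_mem (mul_mem (mul_mem mq m1') m0) m1') mq) m1') m0) m1'
  have t3mem : (R2' * R2'' * R1 * R0 * R1 * R0 * R1 * R2'') ∈ H := mul_mem (mul_mem (mul_mem (mul_mem (mul_mem (mul_mem (mul_mem mp mq) m1') m0) m1') m0) m1') mq
  have t3mem' : (R2'' * R1 * R0 * R1 * R0 * R1 * R2'' * R2') ∈ H := mul_mem (mul_mem (mul_mem (mul_mem (mul_mem (mul_mem (mul_mem mq m1') m0) m1') m0) m1') mq) mp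
  have happ1 : ∀ y : E3, (R0 * R1 * R2'' * R1 * R0 * R1 * R2'' * R1) y
      = pt (y 0 + 2 * a) (y 1) (y 2 + 2 * a) := by
    intro y
    simp only [mulapp, hR0, hR1, hR2', hR2'', e0, e1, e2]
    exact ptext (by ring) (by ring) (by ring)
  have happ1' : ∀ y : E3, (R1 * R2'' * R1 * R0 * R1 * R2'' * R1 * R0) y
      = pt (y 0 - 2 * a) (y 1) (y 2 - 2 * a) := by
    intro y
    simp only [mulapp, hR0, hR1, hR2', hR2'', e0, e1, e2]
    exact ptext (by ring) (by ring) (by ring)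
  have happ2 : ∀ y : E3, (R1 * R0 * R1 * R2'' * R1 * R0 * R1 * R2'') y
      = pt (y 0) (y 1 + 2 * a) (y 2 + 2 * a) := by
    intro y
    simp only [mulapp, hR0, hR1, hR2', hR2'', e0, e1, e2]
    exact ptext (by ring) (by ring) (by ring)
  have happ2' : ∀ y : E3, (R2'' * R1 * R0 * R1 * R2'' * R1 * R0 * R1) y
      = pt (y 0) (y 1 - 2 * a) (y 2 - 2 * a) := by
    intro y
    simp only [mulapp, hR0, hR1, hR2', hR2'', e0, e1, e2]
    exact ptext (by ring) (by ring) (by ring)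
  have happ3 : ∀ y : E3, (R2' * R2'' * R1 * R0 * R1 * R0 * R1 * R2'') y
      = pt (y 0 + 2 * a) (y 1 + 2 * a) (y 2) := by
    intro y
    simp only [mulapp, hR0, hR1, hR2', hR2'', e0, e1, e2]
    exact ptext (by ring) (by ring) (by ring)
  have happ3' : ∀ y : E3, (R2'' * R1 * R0 * R1 * R0 * R1 * R2'' * R2') y
      = pt (y 0 - 2 * a) (y 1 - 2 * a) (y 2) := by
    intro y
    simp only [mulapp, hR0, hR1, hR2', hR2'', e0, e1, e2]
    exact ptext (by ring) (by ring) (by ring)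
  have key1 : ∀ (k : ℤ) (y : E3), y ∈ O →
      pt (y 0 + 2 * a * k) (y 1) (y 2 + 2 * a * k) ∈ O := by
    intro k
    induction k using Int.induction_on with
    | zero =>
            intro y hy
            have : pt (y 0 + 2 * a * ((0 : ℤ) : ℝ)) (y 1) (y 2 + 2 * a * ((0 : ℤ) : ℝ)) = y := by
              rw [← ptself y]; simp only [e0, e1, e2]
              exact ptext (by push_cast; ring) rfl (by push_cast; ring)
            rwa [this]
    | succ k ih =>
                 intro y hy
                 have h := stepgen _ t1mem _ (ih y hy)
                 rw [happ1] at h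
                 convert h using 1
                 simp only [e0, e1, e2]
                 exact ptext (by push_cast; ring) rfl (by push_cast; ring)
    | pred k ih =>
                 intro y hy
                 have h := stepgen _ t1mem' _ (ih y hy)
                 rw [happ1'] at h
                 convert h using 1
                 simp only [e0, e1, e2]
                 exact ptext (by push_cast; ring) rfl (by push_cast; ring)
  have key2 : ∀ (k : ℤ) (y : E3), y ∈ O →
      pt (y 0) (y 1 + 2 * a * k) (y 2 + 2 * a * k) ∈ O := by
    intro k
    induction k using Int.induction_on with
    | zero =>
            intro y hy
            have : pt (y 0) (y 1 + 2 * a * ((0 : ℤ) : ℝ)) (y 2 + 2 * a * ((0 : ℤ) : ℝ)) = y := by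
              rw [← ptself y]; simp only [e0, e1, e2]
              exact ptext rfl (by push_cast; ring) (by push_cast; ring)
            rwa [this]
    | succ k ih =>
                 intro y hy
                 have h := stepgen _ t2mem _ (ih y hy)
                 rw [happ2] at h
                 convert h using 1
                 simp only [e0, e1, e2]
                 exact ptext rfl (by push_cast; ring) (by push_cast; ring)
    | pred k ih =>
                 intro y hy
                 have h := stepgen _ t2mem' _ (ih y hy)
                 rw [happ2'] at h
                 convert h using 1
                 simp only [e0, e1, e2]
                 exact ptext rfl (by push_cast; ring) (by push_cast; ring)
  have key3 : ∀ (k : ℤ) (y : E3), y ∈ O →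
      pt (y 0 + 2 * a * k) (y 1 + 2 * a * k) (y 2) ∈ O := by
    intro k
    induction k using Int.induction_on with
    | zero =>
            intro y hy
            have : pt (y 0 + 2 * a * ((0 : ℤ) : ℝ)) (y 1 + 2 * a * ((0 : ℤ) : ℝ)) (y 2) = y := by
              rw [← ptself y]; simp only [e0, e1, e2]
              exact ptext (by push_cast; ring) (by push_cast; ring) rfl
            rwa [this]
    | succ k ih =>
                 intro y hy
                 have h := stepgen _ t3mem _ (ih y hy)
                 rw [happ3] at h
                 convert h using 1
                 simp only [e0, e1, e2]
                 exact ptext (by push_cast; ring) (by push_cast; ring) rfl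
    | pred k ih =>
                 intro y hy
                 have h := stepgen _ t3mem' _ (ih y hy)
                 rw [happ3'] at h
                 convert h using 1
                 simp only [e0, e1, e2]
                 exact ptext (by push_cast; ring) (by push_cast; ring) rfl
  have base0 : (0 : E3) ∈ O := ⟨1, one_mem H, rfl⟩
  have baseA : pt a (-a) a ∈ O := by
    refine ⟨R0, m0, ?_⟩
    rw [hR0]
    exact ptext (by norm_num [show ((0 : E3) 2) = 0 from rfl])
      (by norm_num [show ((0 : E3) 1) = 0 from rfl])
      (by norm_num [show ((0 : E3) 0) = 0 from rfl])
  ------------------------------------------------------------------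
  ext y
  constructor
  · rintro ⟨g, hg, rfl⟩
    have h0S : inS (0 : E3) := Or.inl ⟨0, 0, 0, ⟨0, by ring⟩, by
      refine ⟨?_, ?_, ?_⟩ <;> simp [show ∀ i : Fin 3, (0 : E3) i = 0 from fun _ => rfl]⟩
    exact (hforward g hg).1 0 h0S
  · rintro (⟨n1, n2, n3, ⟨c, hc⟩, h0, h1, h2⟩ | ⟨n1, n2, n3, ⟨c, hc⟩, h0, h1, h2⟩)
    · have h := key1 (c - n2) _ (key2 (c - n1) _ (key3 (c - n3) _ base0))
      have hcr : (n1 : ℝ) + n2 + n3 = c + c := by exact_mod_cast hc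
      refine Set.mem_of_eq_of_mem ?_ h
      rw [← ptself y, h0, h1, h2]
      simp only [e0, e1, e2, show ∀ i : Fin 3, (0 : E3) i = 0 from fun _ => rfl]
      refine ptext ?_ ?_ ?_ <;> push_cast <;> linear_combination (2*a)*hcr
    · have h := key1 (c - n2) _ (key2 (c - n1) _ (key3 (c - n3) _ baseA))
      have hcr : (n1 : ℝ) + n2 + n3 = c + c := by exact_mod_cast hc
      refine Set.mem_of_eq_of_mem ?_ h
      rw [← ptself y, h0, h1, h2]
      simp only [e0, e1, e2]
      refine ptext ?_ ?_ ?_ <;> push_cast <;> linear_combination (2*a)*hcr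
end
end

section
/- Fix a real number a ≠ 0 and let G be the subgroup of isometries of ℝ³ generated by the four maps R₀(x,y,z) = (−z + a, −y, −x + a), R₁(x,y,z) = (y, x, z), R₂(x,y,z) = (x, −y, z), R̂₂(x,y,z) = (z, y, x). Then the orbit of the origin under G (the vertex set of the regular complex K₈(1,2)) equals the face-centered cubic lattice Λ_{(a,a,0)} = {(am₁, am₂, am₃) : m₁, m₂, m₃ ∈ ℤ, m₁ + m₂ + m₃ even}. -/
/- STATEMENT 18: For a ≠ 0, the orbit of the origin under the group generated by
R₀(x,y,z) = (−z + a, −y, −x + a), R₁(x,y,z) = (y, x, z), R₂(x,y,z) = (x, −y, z),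
R̂₂(x,y,z) = (z, y, x) (the vertex set of K₈(1,2)) equals the face-centered cubic lattice
Λ_{(a,a,0)} = {(am₁, am₂, am₃) : mᵢ ∈ ℤ, m₁ + m₂ + m₃ even}. -/

noncomputable section

theorem vertex_set_K8_12
    (a : ℝ) (ha : a ≠ 0)
    (R0 R1 R2 R2' : E3 ≃ᵢ E3)
    (hR0 : ∀ x : E3, R0 x = pt (-(x 2) + a) (-(x 1)) (-(x 0) + a))
    (hR1 : ∀ x : E3, R1 x = pt (x 1) (x 0) (x 2))
    (hR2 : ∀ x : E3, R2 x = pt (x 0) (-(x 1)) (x 2))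
    (hR2' : ∀ x : E3, R2' x = pt (x 2) (x 1) (x 0)) :
    {y : E3 | ∃ g ∈ Subgroup.closure {R0, R1, R2, R2'}, g 0 = y} =
      {y : E3 | ∃ m1 m2 m3 : ℤ,
        y 0 = a * m1 ∧ y 1 = a * m2 ∧ y 2 = a * m3 ∧ Even (m1 + m2 + m3)} := by
  set S : Set E3 := {y : E3 | ∃ m1 m2 m3 : ℤ,
        y 0 = a * m1 ∧ y 1 = a * m2 ∧ y 2 = a * m3 ∧ Even (m1 + m2 + m3)} with hSdef
  have hmul : ∀ (f g : E3 ≃ᵢ E3) (x : E3), (f * g) x = f (g x) := fun _ _ _ => rfl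
  have hpt0 : ∀ x y z : ℝ, pt x y z 0 = x := fun _ _ _ => rfl
  have hpt1 : ∀ x y z : ℝ, pt x y z 1 = y := fun _ _ _ => rfl
  have hpt2 : ∀ x y z : ℝ, pt x y z 2 = z := fun _ _ _ => rfl
  -- generators map S to S
  have hS0 : ∀ y ∈ S, R0 y ∈ S := by
    rintro y ⟨m1, m2, m3, h1, h2, h3, t, ht⟩
    exact ⟨1 - m3, -m2, 1 - m1, by rw [hR0, hpt0, h3]; push_cast; ring,
      by rw [hR0, hpt1, h2]; push_cast; ring,
      by rw [hR0, hpt2, h1]; push_cast; ring, ⟨1 - t, by omega⟩⟩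
  have hS1 : ∀ y ∈ S, R1 y ∈ S := by
    rintro y ⟨m1, m2, m3, h1, h2, h3, t, ht⟩
    exact ⟨m2, m1, m3, by rw [hR1, hpt0, h2], by rw [hR1, hpt1, h1],
      by rw [hR1, hpt2, h3], ⟨t, by omega⟩⟩
  have hS2 : ∀ y ∈ S, R2 y ∈ S := by
    rintro y ⟨m1, m2, m3, h1, h2, h3, t, ht⟩
    exact ⟨m1, -m2, m3, by rw [hR2, hpt0, h1],
      by rw [hR2, hpt1, h2]; push_cast; ring,
      by rw [hR2, hpt2, h3], ⟨t - m2, by omega⟩⟩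
  have hS2' : ∀ y ∈ S, R2' y ∈ S := by
    rintro y ⟨m1, m2, m3, h1, h2, h3, t, ht⟩
    exact ⟨m3, m2, m1, by rw [hR2', hpt0, h3], by rw [hR2', hpt1, h2],
      by rw [hR2', hpt2, h1], ⟨t, by omega⟩⟩
  -- generators are involutions
  have ptext : ∀ {u v w : ℝ} (y : E3), u = y 0 → v = y 1 → w = y 2 → pt u v w = y := by
    intro u v w y hu hv hw
    ext i
    fin_cases i
    · exact hu
    · exact hv
    · exact hw
  have i0 : ∀ y, R0 (R0 y) = y := by
    intro y; rw [hR0, hR0]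
    exact ptext y (by simp only [hpt0, hpt1, hpt2]; try ring) (by simp only [hpt0, hpt1, hpt2]; try ring) (by simp only [hpt0, hpt1, hpt2]; try ring)
  have i1 : ∀ y, R1 (R1 y) = y := by
    intro y; rw [hR1, hR1]
    exact ptext y (by simp only [hpt0, hpt1, hpt2]; try ring) (by simp only [hpt0, hpt1, hpt2]; try ring) (by simp only [hpt0, hpt1, hpt2]; try ring)
  have i2 : ∀ y, R2 (R2 y) = y := by
    intro y; rw [hR2, hR2]
    exact ptext y (by simp only [hpt0, hpt1, hpt2]; try ring) (by simp only [hpt0, hpt1, hpt2]; try ring) (by simp only [hpt0, hpt1, hpt2]; try ring)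
  have i2' : ∀ y, R2' (R2' y) = y := by
    intro y; rw [hR2', hR2']
    exact ptext y (by simp only [hpt0, hpt1, hpt2]; try ring) (by simp only [hpt0, hpt1, hpt2]; try ring) (by simp only [hpt0, hpt1, hpt2]; try ring)
  -- subgroup preserving S
  set K : Subgroup (E3 ≃ᵢ E3) :=
    { carrier := {g | ∀ y, y ∈ S ↔ g y ∈ S}
      one_mem' := by intro y; rfl
      mul_mem' := by
        intro g h hg hh y
        rw [hmul]
        exact (hh y).trans (hg (h y))
      inv_mem' := by
        intro g hg y
        have := hg (g⁻¹ y)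
        rw [show g (g⁻¹ y) = y from g.apply_symm_apply y] at this
        exact this.symm } with hKdef
  have hclos : Subgroup.closure {R0, R1, R2, R2'} ≤ K := by
    rw [Subgroup.closure_le]
    rintro r hr
    simp only [Set.mem_insert_iff, Set.mem_singleton_iff] at hr
    rcases hr with rfl | rfl | rfl | rfl
    · exact fun y => ⟨fun h => hS0 y h, fun h => by
        have := hS0 _ h; rwa [i0] at this⟩
    · exact fun y => ⟨fun h => hS1 y h, fun h => by
        have := hS1 _ h; rwa [i1] at this⟩
    · exact fun y => ⟨fun h => hS2 y h, fun h => by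
        have := hS2 _ h; rwa [i2] at this⟩
    · exact fun y => ⟨fun h => hS2' y h, fun h => by
        have := hS2' _ h; rwa [i2'] at this⟩
  -- membership of generators in the closure
  have mR0 : R0 ∈ Subgroup.closure {R0, R1, R2, R2'} := Subgroup.subset_closure (by simp)
  have mR1 : R1 ∈ Subgroup.closure {R0, R1, R2, R2'} := Subgroup.subset_closure (by simp)
  have mR2 : R2 ∈ Subgroup.closure {R0, R1, R2, R2'} := Subgroup.subset_closure (by simp)
  have mR2' : R2' ∈ Subgroup.closure {R0, R1, R2, R2'} := Subgroup.subset_closure (by simp)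
  -- translations in the group
  have hnegX : ∀ x : E3, (R1 * R2 * R1) x = pt (-(x 0)) (x 1) (x 2) := by
    intro x
    rw [hmul, hmul, hR1, hR2, hR1]
    exact ptext _ (by simp only [hpt0, hpt1, hpt2]; try ring) (by simp only [hpt0, hpt1, hpt2]; try ring) (by simp only [hpt0, hpt1, hpt2]; try ring)
  have hnegZ : ∀ x : E3, (R2' * (R1 * R2 * R1) * R2') x = pt (x 0) (x 1) (-(x 2)) := by
    intro x
    rw [hmul, hmul, hnegX, hR2', hR2']
    exact ptext _ (by simp only [hpt0, hpt1, hpt2]; try ring) (by simp only [hpt0, hpt1, hpt2]; try ring) (by simp only [hpt0, hpt1, hpt2]; try ring)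
  set N : E3 ≃ᵢ E3 := (R1 * R2 * R1) * R2 * (R2' * (R1 * R2 * R1) * R2') with hNdef
  have hN : ∀ x : E3, N x = pt (-(x 0)) (-(x 1)) (-(x 2)) := by
    intro x
    rw [hNdef, hmul, hmul, hnegZ, hR2, hnegX]
    exact ptext _ (by simp only [hpt0, hpt1, hpt2]; try ring) (by simp only [hpt0, hpt1, hpt2]; try ring) (by simp only [hpt0, hpt1, hpt2]; try ring)
  set T2 : E3 ≃ᵢ E3 := R0 * R2' * N with hT2def
  have hT2 : ∀ x : E3, T2 x = x + pt a 0 a := by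
    intro x
    rw [hT2def, hmul, hmul, hN, hR2', hR0]
    refine ptext _ ?_ ?_ ?_ <;>
      simp only [PiLp.add_apply, hpt0, hpt1, hpt2] <;> try ring
  set T1 : E3 ≃ᵢ E3 := (R1 * R2' * R1) * T2 * (R1 * R2' * R1) with hT1def
  have hswap : ∀ x : E3, (R1 * R2' * R1) x = pt (x 0) (x 2) (x 1) := by
    intro x
    rw [hmul, hmul, hR1, hR2', hR1]
    exact ptext _ (by simp only [hpt0, hpt1, hpt2]; try ring) (by simp only [hpt0, hpt1, hpt2]; try ring) (by simp only [hpt0, hpt1, hpt2]; try ring)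
  have hT1 : ∀ x : E3, T1 x = x + pt a a 0 := by
    intro x
    rw [hT1def, hmul, hmul, hswap, hT2, hswap]
    refine ptext _ ?_ ?_ ?_ <;>
      simp only [PiLp.add_apply, hpt0, hpt1, hpt2] <;> try ring
  set T3 : E3 ≃ᵢ E3 := R1 * T2 * R1 with hT3def
  have hT3 : ∀ x : E3, T3 x = x + pt 0 a a := by
    intro x
    rw [hT3def, hmul, hmul, hR1, hT2, hR1]
    refine ptext _ ?_ ?_ ?_ <;>
      simp only [PiLp.add_apply, hpt0, hpt1, hpt2] <;> try ring
  have mT2 : T2 ∈ Subgroup.closure {R0, R1, R2, R2'} := by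
    rw [hT2def, hNdef]
    exact mul_mem (mul_mem mR0 mR2')
      (mul_mem (mul_mem (mul_mem (mul_mem mR1 mR2) mR1) mR2)
        (mul_mem (mul_mem mR2' (mul_mem (mul_mem mR1 mR2) mR1)) mR2'))
  have mT1 : T1 ∈ Subgroup.closure {R0, R1, R2, R2'} := by
    rw [hT1def]
    exact mul_mem (mul_mem (mul_mem (mul_mem mR1 mR2') mR1) mT2)
      (mul_mem (mul_mem mR1 mR2') mR1)
  have mT3 : T3 ∈ Subgroup.closure {R0, R1, R2, R2'} := by
    rw [hT3def]
    exact mul_mem (mul_mem mR1 mT2) mR1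
  -- powers of translations
  have hpow : ∀ (t : E3 ≃ᵢ E3) (v : E3), (∀ x, t x = x + v) →
      ∀ (k : ℤ) (x : E3), (t ^ k) x = x + k • v := by
    intro t v ht
    have hinv : ∀ x, t⁻¹ x = x - v := by
      intro x
      apply t.injective
      rw [show t (t⁻¹ x) = x from t.apply_symm_apply x, ht]
      abel
    intro k
    induction k using Int.induction_on with
    | zero => intro x; simp
    | succ n ih =>
        intro x
        rw [zpow_add_one, hmul, ht, ih, add_zsmul, one_zsmul]
        abel
    | pred n ih =>
        intro x
        rw [zpow_sub_one, hmul, hinv, ih, sub_zsmul, one_zsmul]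
        abel
  -- conclusion
  ext y
  simp only [Set.mem_setOf_eq]
  constructor
  · rintro ⟨g, hg, rfl⟩
    have h0 : (0 : E3) ∈ S :=
      ⟨0, 0, 0, by simp [show (0 : E3) 0 = 0 from rfl],
        by simp [show (0 : E3) 1 = 0 from rfl],
        by simp [show (0 : E3) 2 = 0 from rfl], Even.zero⟩
    exact (hclos hg 0).mp h0
  · rintro ⟨m1, m2, m3, h1, h2, h3, s, hs⟩
    refine ⟨T1 ^ (s - m3) * (T2 ^ (s - m2) * T3 ^ (s - m1)), ?_, ?_⟩
    · exact mul_mem (zpow_mem mT1 _) (mul_mem (zpow_mem mT2 _) (zpow_mem mT3 _))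
    · rw [hmul, hmul, hpow T3 _ hT3, hpow T2 _ hT2, hpow T1 _ hT1]
      ext i
      fin_cases i
      · show ((0 : E3) + (s - m1) • pt 0 a a + (s - m2) • pt a 0 a
            + (s - m3) • pt a a 0) 0 = y 0
        simp only [PiLp.add_apply, PiLp.smul_apply, hpt0, h1, zsmul_eq_mul]
        push_cast
        have hs' : (m1 : ℝ) + m2 + m3 = s + s := by exact_mod_cast congrArg Int.cast hs
        show (0 : E3) 0 + _ + _ + _ = _
        rw [show (0 : E3) 0 = 0 from rfl]
        linear_combination (-a) * hs'
      · show ((0 : E3) + (s - m1) • pt 0 a a + (s - m2) • pt a 0 a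
            + (s - m3) • pt a a 0) 1 = y 1
        simp only [PiLp.add_apply, PiLp.smul_apply, hpt1, h2, zsmul_eq_mul]
        push_cast
        have hs' : (m1 : ℝ) + m2 + m3 = s + s := by exact_mod_cast congrArg Int.cast hs
        rw [show (0 : E3) 1 = 0 from rfl]
        linear_combination (-a) * hs'
      · show ((0 : E3) + (s - m1) • pt 0 a a + (s - m2) • pt a 0 a
            + (s - m3) • pt a a 0) 2 = y 2
        simp only [PiLp.add_apply, PiLp.smul_apply, hpt2, h3, zsmul_eq_mul]
        push_cast
        have hs' : (m1 : ℝ) + m2 + m3 = s + s := by exact_mod_cast congrArg Int.cast hs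
        rw [show (0 : E3) 2 = 0 from rfl]
        linear_combination (-a) * hs'
end
end
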